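/- arXiv:2206.12963 — 4 statements merged into one kernel-verified Lean document; each statement's English description precedes it below -/
import Mathlib

section
/- Let P = VVᵀ be the orthogonal projection onto a subspace D ⊆ ℝ^d with V having orthonormal columns, let θ be invertible, and let P̂ be the orthogonal projection onto θD = {θx : x ∈ D}. Then ‖θ⁻¹P̂θ − P‖₂ ≤ (1 + κ(θ)²)·‖I − θᵀθ‖₂, where κ(θ) is the condition number of θ in the spectral norm. -/
open Matrix

/-- The spectral (ℓ² operator) norm of a real matrix. -/
noncomputable def spec {m n : ℕ} (A : Matrix (Fin m) (Fin n) ℝ) : ℝ :=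
  ‖LinearMap.toContinuousLinearMap (Matrix.toEuclideanLin A)‖

open scoped Matrix.Norms.L2Operator RealInnerProductSpace

namespace SpecAux

variable {l m n : ℕ}

lemma spec_eq (A : Matrix (Fin m) (Fin n) ℝ) : spec A = ‖A‖ := rfl

lemma spec_transpose (A : Matrix (Fin m) (Fin n) ℝ) : ‖Aᵀ‖ = ‖A‖ := by
  rw [← Matrix.conjTranspose_eq_transpose_of_trivial, Matrix.l2_opNorm_conjTranspose]

lemma spec_cstar (A : Matrix (Fin m) (Fin n) ℝ) : ‖Aᵀ * A‖ = ‖A‖ * ‖A‖ := by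
  rw [← Matrix.conjTranspose_eq_transpose_of_trivial, Matrix.l2_opNorm_conjTranspose_mul_self]

lemma spec_one_le : ‖(1 : Matrix (Fin n) (Fin n) ℝ)‖ ≤ 1 := by
  rw [Matrix.cstar_norm_def, _root_.map_one]
  exact ContinuousLinearMap.norm_id_le

lemma spec_one (hn : 0 < n) : ‖(1 : Matrix (Fin n) (Fin n) ℝ)‖ = 1 := by
  rw [Matrix.cstar_norm_def, _root_.map_one]
  have : Nontrivial (EuclideanSpace ℝ (Fin n)) := by
    haveI : Nonempty (Fin n) := ⟨⟨0, hn⟩⟩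
    infer_instance
  exact ContinuousLinearMap.norm_id

lemma inner_toEL (A : Matrix (Fin m) (Fin n) ℝ) (x : EuclideanSpace ℝ (Fin n))
    (y : EuclideanSpace ℝ (Fin m)) :
    ⟪y, Matrix.toEuclideanLin A x⟫ = ⟪Matrix.toEuclideanLin Aᵀ y, x⟫ := by
  rw [EuclideanSpace.inner_eq_star_dotProduct, EuclideanSpace.inner_eq_star_dotProduct]
  simp [Matrix.toEuclideanLin_apply, Matrix.dotProduct_mulVec, Matrix.mulVec_transpose]
  rw [dotProduct_comm, dotProduct_mulVec, dotProduct_comm]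

lemma toEL_mul (A : Matrix (Fin l) (Fin m) ℝ) (B : Matrix (Fin m) (Fin n) ℝ)
    (x : EuclideanSpace ℝ (Fin n)) :
    Matrix.toEuclideanLin (A * B) x = Matrix.toEuclideanLin A (Matrix.toEuclideanLin B x) := by
  simp [Matrix.toEuclideanLin_apply, Matrix.mulVec_mulVec]

lemma toEL_one (x : EuclideanSpace ℝ (Fin n)) :
    Matrix.toEuclideanLin (1 : Matrix (Fin n) (Fin n) ℝ) x = x := by
  simp [Matrix.toEuclideanLin_apply, Matrix.one_mulVec]

lemma norm_toEL_le (A : Matrix (Fin m) (Fin n) ℝ) (x : EuclideanSpace ℝ (Fin n)) :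
    ‖Matrix.toEuclideanLin A x‖ ≤ ‖A‖ * ‖x‖ :=
  (Matrix.toEuclideanLin.trans LinearMap.toContinuousLinearMap A).le_opNorm x

lemma spec_le_bound (A : Matrix (Fin m) (Fin n) ℝ) (C : ℝ) (hC : 0 ≤ C)
    (h : ∀ x : EuclideanSpace ℝ (Fin n), ‖Matrix.toEuclideanLin A x‖ ≤ C * ‖x‖) :
    ‖A‖ ≤ C := by
  rw [Matrix.l2_opNorm_def]
  exact ContinuousLinearMap.opNorm_le_bound _ hC h

lemma norm_toEL_eq_of_iso (V : Matrix (Fin m) (Fin n) ℝ) (hV : Vᵀ * V = 1)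
    (x : EuclideanSpace ℝ (Fin n)) : ‖Matrix.toEuclideanLin V x‖ = ‖x‖ := by
  have h1 : ⟪Matrix.toEuclideanLin V x, Matrix.toEuclideanLin V x⟫ = ⟪x, x⟫ := by
    rw [inner_toEL, ← toEL_mul, hV]
    simp [Matrix.toEuclideanLin_apply]
  have h2 : ‖Matrix.toEuclideanLin V x‖ ^ 2 = ‖x‖ ^ 2 := by
    rw [← real_inner_self_eq_norm_sq, ← real_inner_self_eq_norm_sq]; exact h1
  have h3 := congrArg Real.sqrt h2
  rwa [Real.sqrt_sq (norm_nonneg _), Real.sqrt_sq (norm_nonneg _)] at h3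

lemma spec_le_one_of_proj (Q : Matrix (Fin n) (Fin n) ℝ) (hQ : Qᵀ * Q = Q) : ‖Q‖ ≤ 1 := by
  apply spec_le_bound _ _ zero_le_one
  intro y
  rw [one_mul]
  rcases eq_or_ne (Matrix.toEuclideanLin Q y) 0 with h | h
  · simp [h]
  · have h1 : ⟪Matrix.toEuclideanLin Q y, Matrix.toEuclideanLin Q y⟫
        = ⟪Matrix.toEuclideanLin Q y, y⟫ := by
      have e1 := inner_toEL Q y (Matrix.toEuclideanLin Q y)
      rw [← toEL_mul, hQ] at e1
      exact e1
    have h2 := real_inner_le_norm (Matrix.toEuclideanLin Q y) y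
    rw [real_inner_self_eq_norm_sq] at h1
    nlinarith [norm_pos_iff.2 h, norm_nonneg y]

lemma spec_le_of_symm (Y : Matrix (Fin n) (Fin n) ℝ) (hY : Yᵀ = Y) (ρ : ℝ) (hρ : 0 ≤ ρ)
    (h : ∀ x : EuclideanSpace ℝ (Fin n), |⟪x, Matrix.toEuclideanLin Y x⟫| ≤ ρ * ‖x‖ ^ 2) :
    ‖Y‖ ≤ ρ := by
  apply spec_le_bound _ _ hρ
  intro x
  set T := Matrix.toEuclideanLin Y with hT
  rcases eq_or_ne (T x) 0 with h0 | h0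
  · rw [h0, norm_zero]; positivity
  have hx : x ≠ 0 := by rintro rfl; exact h0 (map_zero T)
  set u : EuclideanSpace ℝ (Fin n) := T x with hu
  set y : EuclideanSpace ℝ (Fin n) := (‖x‖ / ‖u‖) • u with hy
  have hupos : 0 < ‖u‖ := norm_pos_iff.2 h0
  have hxpos : 0 < ‖x‖ := norm_pos_iff.2 hx
  have hsym : ∀ a b : EuclideanSpace ℝ (Fin n), ⟪a, T b⟫ = ⟪T a, b⟫ := by
    intro a b
    have e := inner_toEL Y b a
    rw [hY] at e
    exact e
  have pol : ⟪T x, y⟫ = (⟪x + y, T (x + y)⟫ - ⟪x - y, T (x - y)⟫) / 4 := by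
    rw [map_add, map_sub]
    simp only [inner_add_left, inner_add_right, inner_sub_left, inner_sub_right]
    have c1 : ⟪x, T y⟫ = ⟪T x, y⟫ := hsym x y
    have c2 : ⟪y, T x⟫ = ⟪T x, y⟫ := real_inner_comm (T x) y
    linarith
  have hyx : ‖y‖ = ‖x‖ := by
    rw [hy, norm_smul, Real.norm_eq_abs, abs_of_nonneg (by positivity)]
    field_simp
  have hTxy : ⟪T x, y⟫ = ‖x‖ * ‖u‖ := by
    rw [hy, real_inner_smul_right, real_inner_self_eq_norm_sq]
    field_simp
    ring
  have b1 := (abs_le.mp (h (x + y))).2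
  have b2 := (abs_le.mp (h (x - y))).1
  have par : ‖x + y‖ ^ 2 + ‖x - y‖ ^ 2 = 2 * (‖x‖ ^ 2 + ‖y‖ ^ 2) := by
    have e := parallelogram_law_with_norm ℝ x y
    ring_nf
    ring_nf at e
    linarith
  have hyx2 : ‖y‖ ^ 2 = ‖x‖ ^ 2 := by rw [hyx]
  have e3 : ⟪x + y, T (x + y)⟫ - ⟪x - y, T (x - y)⟫ ≤ ρ * ‖x + y‖ ^ 2 + ρ * ‖x - y‖ ^ 2 := by
    linarith
  have e4 : ρ * ‖x + y‖ ^ 2 + ρ * ‖x - y‖ ^ 2 = 4 * (ρ * ‖x‖ ^ 2) := by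
    calc ρ * ‖x + y‖ ^ 2 + ρ * ‖x - y‖ ^ 2 = ρ * (‖x + y‖ ^ 2 + ‖x - y‖ ^ 2) := by ring
    _ = ρ * (2 * (‖x‖ ^ 2 + ‖y‖ ^ 2)) := by rw [par]
    _ = 4 * (ρ * ‖x‖ ^ 2) := by rw [hyx2]; ring
  have key : ‖x‖ * ‖u‖ ≤ ρ * ‖x‖ ^ 2 := by linarith
  calc ‖T x‖ = ‖u‖ := rfl
  _ ≤ ρ * ‖x‖ := by nlinarith

lemma spec_midpoint (θ : Matrix (Fin n) (Fin n) ℝ) (α β : ℝ) (hαβ : α ≤ β)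
    (hlow : ∀ x : EuclideanSpace ℝ (Fin n),
      α * ‖x‖ ^ 2 ≤ ‖Matrix.toEuclideanLin θ x‖ ^ 2)
    (hup : ∀ x : EuclideanSpace ℝ (Fin n),
      ‖Matrix.toEuclideanLin θ x‖ ^ 2 ≤ β * ‖x‖ ^ 2) :
    ‖θᵀ * θ - ((α + β) / 2) • 1‖ ≤ (β - α) / 2 := by
  apply spec_le_of_symm
  · rw [Matrix.transpose_sub, Matrix.transpose_smul, Matrix.transpose_one,
      Matrix.transpose_mul, Matrix.transpose_transpose]
  · linarith
  · intro x
    have hq : ⟪x, Matrix.toEuclideanLin (θᵀ * θ - ((α + β) / 2) • 1) x⟫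
        = ‖Matrix.toEuclideanLin θ x‖ ^ 2 - ((α + β) / 2) * ‖x‖ ^ 2 := by
      have e5 : Matrix.toEuclideanLin (θᵀ * θ - ((α + β) / 2) • 1) x
          = Matrix.toEuclideanLin (θᵀ * θ) x - ((α + β) / 2) • x := by
        rw [map_sub, LinearMap.sub_apply, _root_.map_smul, LinearMap.smul_apply, toEL_one]
      rw [e5, inner_sub_right, real_inner_smul_right, real_inner_self_eq_norm_sq]
      congr 1
      rw [toEL_mul, inner_toEL, Matrix.transpose_transpose, real_inner_self_eq_norm_sq]
    rw [hq, abs_le]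
    have h1 := hlow x
    have h2 := hup x
    constructor <;> nlinarith [sq_nonneg ‖x‖]

lemma mul_contract_left {k : ℕ} (X : Matrix (Fin m) (Fin n) ℝ) (Y : Matrix (Fin n) (Fin k) ℝ)
    (hX : ‖X‖ ≤ 1) : ‖X * Y‖ ≤ ‖Y‖ := by
  calc ‖X * Y‖ ≤ ‖X‖ * ‖Y‖ := Matrix.l2_opNorm_mul X Y
  _ ≤ 1 * ‖Y‖ := mul_le_mul_of_nonneg_right hX (norm_nonneg Y)
  _ = ‖Y‖ := one_mul _

lemma mul_contract_right {k : ℕ} (X : Matrix (Fin m) (Fin n) ℝ) (Y : Matrix (Fin n) (Fin k) ℝ)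
    (hY : ‖Y‖ ≤ 1) : ‖X * Y‖ ≤ ‖X‖ := by
  calc ‖X * Y‖ ≤ ‖X‖ * ‖Y‖ := Matrix.l2_opNorm_mul X Y
  _ ≤ ‖X‖ * 1 := mul_le_mul_of_nonneg_left hY (norm_nonneg X)
  _ = ‖X‖ := mul_one _

end SpecAux

open SpecAux

set_option maxHeartbeats 1600000 in
/-- With `P = VVᵀ` the orthogonal projection onto a subspace `D`,
`θ` invertible, and `P̂ = θV[(θV)ᵀ(θV)]⁻¹(θV)ᵀ` the orthogonal projection onto `θD`,
one has `‖θ⁻¹ P̂ θ − P‖₂ ≤ (1 + κ(θ)²)·‖I − θᵀθ‖₂` where `κ(θ) = ‖θ‖₂‖θ⁻¹‖₂`. -/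
theorem stmt_6 (d r : ℕ)
    (V : Matrix (Fin d) (Fin r) ℝ) (hV : Vᵀ * V = 1)
    (θ : Matrix (Fin d) (Fin d) ℝ) (hθ : IsUnit θ.det)
    (P Phat : Matrix (Fin d) (Fin d) ℝ)
    (hP : P = V * Vᵀ)
    (hPhat : Phat = (θ * V) * ((θ * V)ᵀ * (θ * V))⁻¹ * (θ * V)ᵀ) :
    spec (θ⁻¹ * Phat * θ - P)
      ≤ (1 + (spec θ * spec θ⁻¹) ^ 2) * spec (1 - θᵀ * θ) := by
  simp only [spec_eq]
  obtain ⟨B, hB⟩ : ∃ B : Matrix (Fin d) (Fin r) ℝ, B = θ * V := ⟨_, rfl⟩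
  obtain ⟨M, hM⟩ : ∃ M : Matrix (Fin r) (Fin r) ℝ, M = Bᵀ * B := ⟨_, rfl⟩
  have hθl : θ⁻¹ * θ = 1 := nonsing_inv_mul θ hθ
  have hθr : θ * θ⁻¹ = 1 := mul_nonsing_inv θ hθ
  -- M is invertible
  have hMdet : IsUnit M.det := by
    have hps := Matrix.posSemidef_conjTranspose_mul_self B
    have hpd : M.PosDef := by
      refine Matrix.PosDef.of_dotProduct_mulVec_pos (by rw [hM, ← Matrix.conjTranspose_eq_transpose_of_trivial B]; exact hps.1)
        fun x hx => ?_
      have hBx : B *ᵥ x ≠ 0 := by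
        intro h0
        apply hx
        have h1 : θ *ᵥ (V *ᵥ x) = 0 := by rwa [Matrix.mulVec_mulVec, ← hB]
        have h2 : V *ᵥ x = 0 := by
          have h3 := congrArg (fun z => θ⁻¹ *ᵥ z) h1
          simpa [Matrix.mulVec_mulVec, ← Matrix.mul_assoc, hθl, Matrix.one_mul,
            Matrix.one_mulVec] using h3
        have h4 := congrArg (fun z => Vᵀ *ᵥ z) h2
        simpa [Matrix.mulVec_mulVec, ← Matrix.mul_assoc, hV, Matrix.one_mul,
          Matrix.one_mulVec] using h4
      have e1 : star x ⬝ᵥ M *ᵥ x = star (B *ᵥ x) ⬝ᵥ (B *ᵥ x) := by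
        rw [hM, ← Matrix.conjTranspose_eq_transpose_of_trivial B, ← Matrix.mulVec_mulVec,
          Matrix.dotProduct_mulVec, Matrix.vecMul_conjTranspose, star_star]
      rw [e1]
      have nonneg : 0 ≤ star (B *ᵥ x) ⬝ᵥ (B *ᵥ x) :=
        Finset.sum_nonneg fun i _ => by simpa using mul_self_nonneg ((B *ᵥ x) i)
      exact nonneg.lt_of_ne' fun h =>
        hBx (dotProduct_star_self_eq_zero.mp h)
    exact hpd.det_pos.ne'.isUnit
  have hMl : M⁻¹ * M = 1 := nonsing_inv_mul M hMdet
  have hMr : M * M⁻¹ = 1 := mul_nonsing_inv M hMdet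
  have hMs : Mᵀ = M := by rw [hM, Matrix.transpose_mul, Matrix.transpose_transpose]
  have hMis : (M⁻¹)ᵀ = M⁻¹ := by rw [Matrix.transpose_nonsing_inv, hMs]
  have hM2 : M = Vᵀ * (θᵀ * θ * V) := by
    rw [hM, hB, Matrix.transpose_mul]
    simp only [Matrix.mul_assoc]
  have hPhatB : Phat = B * M⁻¹ * Bᵀ := by rw [hPhat, ← hB, ← hM]
  -- key identity
  have key : ∀ c : ℝ, θ⁻¹ * Phat * θ - P
      = V * (M⁻¹ * (Vᵀ * ((θᵀ * θ - c • 1) * (1 - V * Vᵀ)))) := by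
    intro c
    have lhs1 : θ⁻¹ * Phat * θ = V * (M⁻¹ * (Vᵀ * (θᵀ * θ))) := by
      rw [hPhatB, hB, Matrix.transpose_mul]
      simp only [Matrix.mul_assoc]
      rw [← Matrix.mul_assoc θ⁻¹ θ, hθl, Matrix.one_mul]
    have step1 : (θᵀ * θ - c • 1) * (1 - V * Vᵀ)
        = θᵀ * θ * (1 - V * Vᵀ) - c • (1 - V * Vᵀ) := by
      rw [Matrix.sub_mul, Matrix.smul_mul, Matrix.one_mul]
    have hVperp : Vᵀ * (1 - V * Vᵀ) = 0 := by
      rw [Matrix.mul_sub, Matrix.mul_one, ← Matrix.mul_assoc, hV, Matrix.one_mul, sub_self]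
    have step2 : Vᵀ * ((θᵀ * θ - c • 1) * (1 - V * Vᵀ))
        = Vᵀ * (θᵀ * θ) - M * Vᵀ := by
      rw [step1, Matrix.mul_sub, Matrix.mul_smul, hVperp, smul_zero, sub_zero]
      rw [Matrix.mul_sub, Matrix.mul_one]
      rw [Matrix.mul_sub]
      congr 1
      rw [hM2]
      simp only [Matrix.mul_assoc]
    have step3 : M⁻¹ * (Vᵀ * (θᵀ * θ) - M * Vᵀ)
        = M⁻¹ * (Vᵀ * (θᵀ * θ)) - Vᵀ := by
      rw [Matrix.mul_sub, ← Matrix.mul_assoc M⁻¹ M Vᵀ, hMl, Matrix.one_mul]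
    rw [lhs1, step2, step3, Matrix.mul_sub, hP]
  -- contraction facts
  have hVn : ‖V‖ ≤ 1 := by
    apply spec_le_bound _ _ zero_le_one
    intro x
    rw [norm_toEL_eq_of_iso V hV, one_mul]
  have hVtn : ‖Vᵀ‖ ≤ 1 := by rw [spec_transpose]; exact hVn
  have hPP : (V * Vᵀ) * (V * Vᵀ) = V * Vᵀ := by
    rw [Matrix.mul_assoc, ← Matrix.mul_assoc Vᵀ V Vᵀ, hV, Matrix.one_mul]
  have h1mP : ‖1 - V * Vᵀ‖ ≤ 1 := by
    apply spec_le_one_of_proj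
    have hsym : (1 - V * Vᵀ)ᵀ = 1 - V * Vᵀ := by
      rw [Matrix.transpose_sub, Matrix.transpose_one, Matrix.transpose_mul,
        Matrix.transpose_transpose]
    rw [hsym]
    simp only [Matrix.mul_sub, Matrix.sub_mul, Matrix.mul_one, Matrix.one_mul, hPP]
    abel
  -- the main norm bound from the key identity
  have bound : ∀ c : ℝ, ‖θ⁻¹ * Phat * θ - P‖ ≤ ‖M⁻¹‖ * ‖θᵀ * θ - c • 1‖ := by
    intro c
    rw [key c]
    calc ‖V * (M⁻¹ * (Vᵀ * ((θᵀ * θ - c • 1) * (1 - V * Vᵀ))))‖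
        ≤ ‖M⁻¹ * (Vᵀ * ((θᵀ * θ - c • 1) * (1 - V * Vᵀ)))‖ := mul_contract_left _ _ hVn
    _ ≤ ‖M⁻¹‖ * ‖Vᵀ * ((θᵀ * θ - c • 1) * (1 - V * Vᵀ))‖ := Matrix.l2_opNorm_mul _ _
    _ ≤ ‖M⁻¹‖ * ‖θᵀ * θ - c • 1‖ := by
        apply mul_le_mul_of_nonneg_left _ (norm_nonneg _)
        calc ‖Vᵀ * ((θᵀ * θ - c • 1) * (1 - V * Vᵀ))‖
            ≤ ‖(θᵀ * θ - c • 1) * (1 - V * Vᵀ)‖ := mul_contract_left _ _ hVtn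
        _ ≤ ‖θᵀ * θ - c • 1‖ := mul_contract_right _ _ h1mP
  -- easy bound
  have bound1 : ‖θ⁻¹ * Phat * θ - P‖ ≤ ‖M⁻¹‖ * ‖1 - θᵀ * θ‖ := by
    have h2 : ‖θᵀ * θ - (1 : Matrix (Fin d) (Fin d) ℝ)‖ = ‖1 - θᵀ * θ‖ := norm_sub_rev _ _
    have h1 := bound 1
    rw [one_smul, h2] at h1
    exact h1
  -- ‖M⁻¹‖ ≤ ‖θ⁻¹‖^2
  have hproj : Phatᵀ * Phat = Phat := by
    have htp : Phatᵀ = B * (M⁻¹ * Bᵀ) := by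
      rw [hPhatB, Matrix.transpose_mul (B * M⁻¹) Bᵀ, Matrix.transpose_mul B M⁻¹,
        Matrix.transpose_transpose, hMis, ← Matrix.mul_assoc]
    rw [htp, hPhatB]
    simp only [Matrix.mul_assoc]
    rw [← Matrix.mul_assoc Bᵀ B, ← hM, ← Matrix.mul_assoc M⁻¹ M, hMl, Matrix.one_mul]
  have hPhatn : ‖Phat‖ ≤ 1 := spec_le_one_of_proj Phat hproj
  have hBp : (Vᵀ * θ⁻¹) * Phat = M⁻¹ * Bᵀ := by
    rw [hPhatB, hB]
    simp only [Matrix.mul_assoc]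
    rw [← Matrix.mul_assoc θ⁻¹ θ, hθl, Matrix.one_mul, ← Matrix.mul_assoc Vᵀ V, hV,
      Matrix.one_mul]
  have hBpn : ‖M⁻¹ * Bᵀ‖ ≤ ‖θ⁻¹‖ := by
    rw [← hBp]
    calc ‖(Vᵀ * θ⁻¹) * Phat‖ ≤ ‖Vᵀ * θ⁻¹‖ := mul_contract_right _ _ hPhatn
    _ ≤ ‖θ⁻¹‖ := mul_contract_left _ _ hVtn
  have hMinv : M⁻¹ = (M⁻¹ * Bᵀ) * (M⁻¹ * Bᵀ)ᵀ := by
    rw [Matrix.transpose_mul M⁻¹ Bᵀ, Matrix.transpose_transpose, hMis]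
    simp only [Matrix.mul_assoc]
    rw [← Matrix.mul_assoc Bᵀ B, ← hM, ← Matrix.mul_assoc M⁻¹ M, hMl, Matrix.one_mul]
  have hmt2 : ‖M⁻¹‖ ≤ ‖θ⁻¹‖ ^ 2 := by
    calc ‖M⁻¹‖ = ‖(M⁻¹ * Bᵀ) * (M⁻¹ * Bᵀ)ᵀ‖ := by rw [← hMinv]
    _ ≤ ‖M⁻¹ * Bᵀ‖ * ‖(M⁻¹ * Bᵀ)ᵀ‖ := Matrix.l2_opNorm_mul _ _
    _ = ‖M⁻¹ * Bᵀ‖ * ‖M⁻¹ * Bᵀ‖ := by rw [spec_transpose]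
    _ ≤ ‖θ⁻¹‖ * ‖θ⁻¹‖ := mul_le_mul hBpn hBpn (norm_nonneg _) (norm_nonneg _)
    _ = ‖θ⁻¹‖ ^ 2 := (sq _).symm
  -- ‖M⁻¹‖ ≤ 1 + ‖M⁻¹‖ * ‖1 - θᵀθ‖
  have hm1e : ‖M⁻¹‖ ≤ 1 + ‖M⁻¹‖ * ‖1 - θᵀ * θ‖ := by
    have hid : M⁻¹ = 1 + M⁻¹ * (Vᵀ * ((1 - θᵀ * θ) * V)) := by
      have h5 : Vᵀ * ((1 - θᵀ * θ) * V) = 1 - M := by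
        rw [Matrix.sub_mul, Matrix.one_mul, Matrix.mul_sub, hV, hM2]
      rw [h5, Matrix.mul_sub, Matrix.mul_one, hMl]
      abel
    calc ‖M⁻¹‖ = ‖1 + M⁻¹ * (Vᵀ * ((1 - θᵀ * θ) * V))‖ := by rw [← hid]
    _ ≤ ‖(1 : Matrix (Fin r) (Fin r) ℝ)‖ + ‖M⁻¹ * (Vᵀ * ((1 - θᵀ * θ) * V))‖ := norm_add_le _ _
    _ ≤ 1 + ‖M⁻¹‖ * ‖1 - θᵀ * θ‖ := by
        refine add_le_add spec_one_le ?_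
        calc ‖M⁻¹ * (Vᵀ * ((1 - θᵀ * θ) * V))‖
            ≤ ‖M⁻¹‖ * ‖Vᵀ * ((1 - θᵀ * θ) * V)‖ := Matrix.l2_opNorm_mul _ _
        _ ≤ ‖M⁻¹‖ * ‖1 - θᵀ * θ‖ := by
            apply mul_le_mul_of_nonneg_left _ (norm_nonneg _)
            calc ‖Vᵀ * ((1 - θᵀ * θ) * V)‖ ≤ ‖(1 - θᵀ * θ) * V‖ :=
                  mul_contract_left _ _ hVtn
            _ ≤ ‖1 - θᵀ * θ‖ := mul_contract_right _ _ hVn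
  -- ‖θ⁻¹‖^2 ≤ 1 + ‖θ⁻¹‖^2 * ‖1 - θᵀθ‖
  have hcs : ‖θ⁻¹‖ ^ 2 ≤ 1 + ‖θ⁻¹‖ ^ 2 * ‖1 - θᵀ * θ‖ := by
    have hGnorm : ‖θ⁻¹ * (θ⁻¹)ᵀ‖ = ‖θ⁻¹‖ * ‖θ⁻¹‖ := by
      have h7 := spec_cstar (θ⁻¹)ᵀ
      rw [Matrix.transpose_transpose, spec_transpose] at h7
      exact h7
    have htt : (θ⁻¹)ᵀ * θᵀ = 1 := by
      rw [← Matrix.transpose_mul, hθr, Matrix.transpose_one]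
    have hid : θ⁻¹ * (θ⁻¹)ᵀ = 1 + (θ⁻¹ * (θ⁻¹)ᵀ) * (1 - θᵀ * θ) := by
      have h8 : (θ⁻¹ * (θ⁻¹)ᵀ) * (θᵀ * θ) = 1 := by
        simp only [Matrix.mul_assoc]
        rw [← Matrix.mul_assoc (θ⁻¹)ᵀ θᵀ θ, htt, Matrix.one_mul, hθl]
      rw [Matrix.mul_sub, Matrix.mul_one, h8]
      abel
    have h9 : ‖θ⁻¹ * (θ⁻¹)ᵀ‖ ≤ 1 + ‖θ⁻¹ * (θ⁻¹)ᵀ‖ * ‖1 - θᵀ * θ‖ := by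
      calc ‖θ⁻¹ * (θ⁻¹)ᵀ‖ = ‖1 + (θ⁻¹ * (θ⁻¹)ᵀ) * (1 - θᵀ * θ)‖ := by rw [← hid]
      _ ≤ ‖(1 : Matrix (Fin d) (Fin d) ℝ)‖ + ‖(θ⁻¹ * (θ⁻¹)ᵀ) * (1 - θᵀ * θ)‖ := norm_add_le _ _
      _ ≤ 1 + ‖θ⁻¹ * (θ⁻¹)ᵀ‖ * ‖1 - θᵀ * θ‖ := add_le_add spec_one_le (Matrix.l2_opNorm_mul _ _)
    rw [hGnorm] at h9
    calc ‖θ⁻¹‖ ^ 2 = ‖θ⁻¹‖ * ‖θ⁻¹‖ := sq _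
    _ ≤ 1 + ‖θ⁻¹‖ * ‖θ⁻¹‖ * ‖1 - θᵀ * θ‖ := h9
    _ = 1 + ‖θ⁻¹‖ ^ 2 * ‖1 - θᵀ * θ‖ := by ring
  -- now pass to opaque scalars
  obtain ⟨L, hLdef⟩ : ∃ L : ℝ, L = ‖θ‖ := ⟨_, rfl⟩
  obtain ⟨t, htdef⟩ : ∃ t : ℝ, t = ‖θ⁻¹‖ := ⟨_, rfl⟩
  obtain ⟨e, hedef⟩ : ∃ e : ℝ, e = ‖1 - θᵀ * θ‖ := ⟨_, rfl⟩
  obtain ⟨mm, hmmdef⟩ : ∃ mm : ℝ, mm = ‖M⁻¹‖ := ⟨_, rfl⟩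
  rw [← hLdef, ← htdef, ← hedef]
  rw [← hmmdef, ← hedef] at bound1 hm1e
  rw [← hmmdef, ← htdef] at hmt2
  rw [← htdef, ← hedef] at hcs
  have he0 : 0 ≤ e := hedef ▸ norm_nonneg _
  have hL0 : 0 ≤ L := hLdef ▸ norm_nonneg _
  have ht0 : 0 ≤ t := htdef ▸ norm_nonneg _
  have hmm0 : 0 ≤ mm := hmmdef ▸ norm_nonneg _
  -- case split
  by_cases hcase : mm ≤ 1 + (L * t) ^ 2
  · calc ‖θ⁻¹ * Phat * θ - P‖ ≤ mm * e := bound1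
    _ ≤ (1 + (L * t) ^ 2) * e := mul_le_mul_of_nonneg_right hcase he0
  · push_neg at hcase
    have htpos : 0 < t := by
      rcases ht0.lt_or_eq with h | h
      · exact h
      · exfalso; nlinarith [sq_nonneg (L * t)]
    have hd : 0 < d := by
      rcases Nat.eq_zero_or_pos d with h | h
      · exfalso
        have hz : θ⁻¹ = 0 := by subst h; exact Subsingleton.elim _ _
        rw [htdef, hz, norm_zero] at htpos
        exact lt_irrefl 0 htpos
      · exact h
    have hLt1 : 1 ≤ L * t := by
      have h11 : ‖θ * θ⁻¹‖ ≤ ‖θ‖ * ‖θ⁻¹‖ := Matrix.l2_opNorm_mul _ _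
      rw [hθr, spec_one hd, ← hLdef, ← htdef] at h11
      exact h11
    have ht2pos : (0:ℝ) < t ^ 2 := pow_pos htpos 2
    have hx1 : 1 ≤ (L * t) ^ 2 := by nlinarith
    -- midpoint bound
    have hmid : ‖θᵀ * θ - ((1 / t ^ 2 + L ^ 2) / 2) • 1‖ ≤ (L ^ 2 - 1 / t ^ 2) / 2 := by
      refine spec_midpoint θ (1 / t ^ 2) (L ^ 2) ?_ ?_ ?_
      · rw [div_le_iff₀ ht2pos]
        nlinarith
      · intro x
        have e6 : Matrix.toEuclideanLin θ⁻¹ (Matrix.toEuclideanLin θ x) = x := by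
          rw [← toEL_mul, hθl, toEL_one]
        have hlow : ‖x‖ ≤ t * ‖Matrix.toEuclideanLin θ x‖ := by
          calc ‖x‖ = ‖Matrix.toEuclideanLin θ⁻¹ (Matrix.toEuclideanLin θ x)‖ := by rw [e6]
          _ ≤ ‖θ⁻¹‖ * ‖Matrix.toEuclideanLin θ x‖ := norm_toEL_le θ⁻¹ _
          _ = t * ‖Matrix.toEuclideanLin θ x‖ := by rw [htdef]
        have hx0 : 0 ≤ ‖x‖ := norm_nonneg x
        have hw0 : 0 ≤ ‖Matrix.toEuclideanLin θ x‖ := norm_nonneg _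
        rw [div_mul_eq_mul_div, div_le_iff₀ ht2pos]
        nlinarith
      · intro x
        have hup : ‖Matrix.toEuclideanLin θ x‖ ≤ L * ‖x‖ := by
          have h12 := norm_toEL_le θ x
          rwa [← hLdef] at h12
        have hx0 : 0 ≤ ‖x‖ := norm_nonneg x
        have hw0 : 0 ≤ ‖Matrix.toEuclideanLin θ x‖ := norm_nonneg _
        nlinarith
    -- final numeric assembly
    have hfinal := bound ((1 / t ^ 2 + L ^ 2) / 2)
    rw [← hmmdef] at hfinal
    have hstep : ‖θ⁻¹ * Phat * θ - P‖ ≤ t ^ 2 * ((L ^ 2 - 1 / t ^ 2) / 2) := by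
      calc ‖θ⁻¹ * Phat * θ - P‖
          ≤ mm * ‖θᵀ * θ - ((1 / t ^ 2 + L ^ 2) / 2) • 1‖ := hfinal
      _ ≤ t ^ 2 * ((L ^ 2 - 1 / t ^ 2) / 2) :=
          mul_le_mul hmt2 hmid (norm_nonneg _) (le_of_lt ht2pos)
    have hta : t ^ 2 * (1 / t ^ 2) = 1 := by field_simp
    have hu2 : 1 + (L * t) ^ 2 < t ^ 2 := lt_of_lt_of_le hcase hmt2
    have hLHS : t ^ 2 * ((L ^ 2 - 1 / t ^ 2) / 2) = ((L * t) ^ 2 - 1) / 2 := by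
      field_simp
    have hXpos : (0:ℝ) < 1 + (L * t) ^ 2 := by nlinarith
    have h1 : t ^ 2 - 1 ≤ t ^ 2 * e := by nlinarith
    have hstep2 : 2 * (1 + (L * t) ^ 2) * (t ^ 2 - 1) ≤ 2 * (1 + (L * t) ^ 2) * (t ^ 2 * e) := by
      apply mul_le_mul_of_nonneg_left h1 (by linarith)
    have hstep3 : ((L * t) ^ 2 - 1) * t ^ 2 ≤ 2 * (1 + (L * t) ^ 2) * (t ^ 2 - 1) := by
      nlinarith [mul_nonneg (sub_nonneg.2 hx1) (by nlinarith : (0:ℝ) ≤ t ^ 2 - 2)]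
    have hstep4 : ((L * t) ^ 2 - 1) * t ^ 2 ≤ (2 * ((1 + (L * t) ^ 2) * e)) * t ^ 2 := by
      calc ((L * t) ^ 2 - 1) * t ^ 2 ≤ 2 * (1 + (L * t) ^ 2) * (t ^ 2 * e) :=
            le_trans hstep3 hstep2
      _ = (2 * ((1 + (L * t) ^ 2) * e)) * t ^ 2 := by ring
    have hstep5 : (L * t) ^ 2 - 1 ≤ 2 * ((1 + (L * t) ^ 2) * e) :=
      le_of_mul_le_mul_right hstep4 ht2pos
    calc ‖θ⁻¹ * Phat * θ - P‖ ≤ t ^ 2 * ((L ^ 2 - 1 / t ^ 2) / 2) := hstep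
    _ = ((L * t) ^ 2 - 1) / 2 := hLHS
    _ ≤ (1 + (L * t) ^ 2) * e := by linarith
end

section
/- For the linearized closed-loop controlled system with perturbed initial condition, the error satisfies the bound ‖q̄_{ε,t} − x_t‖₂² ≤ ‖θ_{t−1}⋯θ_0‖₂² · ( α^{2t}‖z⊥‖₂² + ‖z∥‖₂² + γ_t‖z‖₂²(γ_t α²(1−α^{t−1})² + 2(α − α^t)) ), where γ_t = max_{s≤t} (1 + κ(θ_{s−1}⋯θ_0)²)‖I − (θ_{s−1}⋯θ_0)ᵀ(θ_{s−1}⋯θ_0)‖₂ and α = c/(1+c). -/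
open Matrix RealInnerProductSpace

namespace Stmt9Aux

variable {d : ℕ}

/-- The matrix as a continuous linear map on Euclidean space. -/
noncomputable def f (A : Matrix (Fin d) (Fin d) ℝ) :
    EuclideanSpace ℝ (Fin d) →L[ℝ] EuclideanSpace ℝ (Fin d) :=
  Matrix.toEuclideanCLM (𝕜 := ℝ) A

lemma f_apply (A : Matrix (Fin d) (Fin d) ℝ) (x : EuclideanSpace ℝ (Fin d)) :
    f A x = (WithLp.toLp 2 (A.mulVec x) : EuclideanSpace ℝ (Fin d)) := rfl

lemma norm_f (A : Matrix (Fin d) (Fin d) ℝ) : ‖f A‖ = spec A := rfl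

lemma spec_nonneg (A : Matrix (Fin d) (Fin d) ℝ) : 0 ≤ spec A := by
  rw [← norm_f]; exact norm_nonneg _

lemma norm_f_apply_le (A : Matrix (Fin d) (Fin d) ℝ) (x : EuclideanSpace ℝ (Fin d)) :
    ‖f A x‖ ≤ spec A * ‖x‖ := by
  rw [← norm_f]; exact (f A).le_opNorm x

lemma star_f (A : Matrix (Fin d) (Fin d) ℝ) : star (f A) = f Aᵀ := by
  rw [show Aᵀ = Aᴴ from (Matrix.conjTranspose_eq_transpose_of_trivial A).symm]
  exact (map_star (Matrix.toEuclideanCLM (𝕜 := ℝ)) A).symm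

set_option maxHeartbeats 1000000 in
lemma inner_f (A : Matrix (Fin d) (Fin d) ℝ) (x y : EuclideanSpace ℝ (Fin d)) :
    ⟪f A x, y⟫ = ⟪x, f Aᵀ y⟫ := by
  rw [← star_f, ContinuousLinearMap.star_eq_adjoint]
  exact (ContinuousLinearMap.adjoint_inner_right _ _ _).symm

lemma f_mul_apply (A B : Matrix (Fin d) (Fin d) ℝ) (x : EuclideanSpace ℝ (Fin d)) :
    f (A * B) x = f A (f B x) := by
  rw [show f (A*B) = f A * f B from map_mul _ _ _]; rfl

lemma f_one_apply (x : EuclideanSpace ℝ (Fin d)) : f (1 : Matrix (Fin d) (Fin d) ℝ) x = x := by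
  rw [show f (1 : Matrix (Fin d) (Fin d) ℝ) = 1 from map_one _]; rfl

lemma f_add (A B : Matrix (Fin d) (Fin d) ℝ) : f (A + B) = f A + f B := map_add _ _ _

lemma f_smul (a : ℝ) (A : Matrix (Fin d) (Fin d) ℝ) : f (a • A) = a • f A := map_smul _ _ _

lemma f_sub (A B : Matrix (Fin d) (Fin d) ℝ) : f (A - B) = f A - f B := map_sub _ _ _

lemma f_one : f (d := d) 1 = 1 := map_one _

set_option maxHeartbeats 1000000 in
set_option synthInstance.maxHeartbeats 400000 in
lemma f_injective : Function.Injective (f (d := d)) := fun A B h =>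
  (Matrix.toEuclideanCLM (𝕜 := ℝ) (n := Fin d)).injective h

end Stmt9Aux
open Stmt9Aux

set_option maxHeartbeats 2000000 in
/-- For the linearized closed-loop controlled system
`q̄_{ε,t+1} − x_{t+1} = θ_t(I−K_t)(q̄_{ε,t} − x_t)` with `q̄_{ε,0} − x_0 = z`,
the error satisfies
`‖q̄_{ε,t} − x_t‖² ≤ ‖θ_{t−1}⋯θ_0‖₂²(α^{2t}‖z⊥‖² + ‖z∥‖² + γ_t‖z‖²(γ_t α²(1−α^{t−1})² + 2(α−α^t)))`
where `γ_t = max_{s≤t} (1+κ(θ_{s−1}⋯θ_0)²)‖I−(θ_{s−1}⋯θ_0)ᵀ(θ_{s−1}⋯θ_0)‖₂`,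
`α = c/(1+c)`. -/
theorem stmt_9 (d t : ℕ) (ht : 1 ≤ t) (c : ℝ) (hc : 0 < c) (α : ℝ) (hα : α = c / (1 + c))
    (Z : Submodule ℝ (EuclideanSpace ℝ (Fin d)))
    (θ : ℕ → Matrix (Fin d) (Fin d) ℝ) (hθ : ∀ s, IsUnit (θ s).det)
    (Θ : ℕ → Matrix (Fin d) (Fin d) ℝ)
    (hΘ : ∀ s, Θ s = ((List.range s).map θ).reverse.prod)
    (W : ℕ → Submodule ℝ (EuclideanSpace ℝ (Fin d)))
    (hW : ∀ s, W s = Z.map (Matrix.toEuclideanLin (Θ s)))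
    (P : ℕ → Matrix (Fin d) (Fin d) ℝ)
    (hPsym : ∀ s, (P s)ᵀ = P s)
    (hPmem : ∀ s x, (WithLp.toLp 2 ((P s).mulVec x) : EuclideanSpace ℝ (Fin d)) ∈ W s)
    (hPfix : ∀ s, ∀ x ∈ W s, (P s).mulVec x = x)
    (K : ℕ → Matrix (Fin d) (Fin d) ℝ)
    (hK : ∀ s, K s = (c • (1 : Matrix (Fin d) (Fin d) ℝ) + (1 - P s)ᵀ * (1 - P s))⁻¹
        * ((1 - P s)ᵀ * (1 - P s)))
    (z zpar zperp : EuclideanSpace ℝ (Fin d))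
    (hz : z = zpar + zperp) (hzpar : zpar ∈ Z) (hzperp : zperp ∈ Zᗮ)
    (q x : ℕ → EuclideanSpace ℝ (Fin d))
    (h0 : q 0 - x 0 = z)
    (hdyn : ∀ s, q (s + 1) - x (s + 1) = (WithLp.toLp 2 ((θ s * (1 - K s)).mulVec (q s - x s)) :
        EuclideanSpace ℝ (Fin d)))
    (γ : ℝ)
    (hγ : γ = Finset.sup' (Finset.Iic t) Finset.nonempty_Iic
        (fun s => (1 + (spec (Θ s) * spec (Θ s)⁻¹) ^ 2) * spec (1 - (Θ s)ᵀ * Θ s))) :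
    ‖q t - x t‖ ^ 2
      ≤ spec (Θ t) ^ 2 * (α ^ (2 * t) * ‖zperp‖ ^ 2 + ‖zpar‖ ^ 2
          + γ * ‖z‖ ^ 2 * (γ * α ^ 2 * (1 - α ^ (t - 1)) ^ 2 + 2 * (α - α ^ t))) := by
  have hα0 : 0 < α := by rw [hα]; positivity
  have hα1 : α < 1 := by
    rw [hα, div_lt_one (by linarith)]; linarith
  -- basic facts about Θ
  have hΘ0 : Θ 0 = 1 := by simp [hΘ]
  have hΘsucc : ∀ s, Θ (s + 1) = θ s * Θ s := by
    intro s; simp [hΘ, List.range_succ]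
  have hΘunit : ∀ s, IsUnit (Θ s).det := by
    intro s; induction s with
    | zero => simp [hΘ0]
    | succ n ih => rw [hΘsucc, Matrix.det_mul]; exact (hθ n).mul ih
  have hfΘinv : ∀ s (w : EuclideanSpace ℝ (Fin d)), f (Θ s) (f (Θ s)⁻¹ w) = w := by
    intro s w
    rw [← f_mul_apply, Matrix.mul_nonsing_inv _ (hΘunit s), f_one_apply]
  have hfinvΘ : ∀ s (w : EuclideanSpace ℝ (Fin d)), f (Θ s)⁻¹ (f (Θ s) w) = w := by
    intro s w
    rw [← f_mul_apply, Matrix.nonsing_inv_mul _ (hΘunit s), f_one_apply]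
  -- W membership
  have hWmem : ∀ s, ∀ v ∈ Z, f (Θ s) v ∈ W s := by
    intro s v hv; rw [hW]; exact ⟨v, hv, rfl⟩
  have hWelim : ∀ s, ∀ w ∈ W s, ∃ v ∈ Z, f (Θ s) v = w := by
    intro s w hw; rw [hW s] at hw; exact hw
  -- P projection facts (f-level)
  have hPmem' : ∀ s (y : EuclideanSpace ℝ (Fin d)), f (P s) y ∈ W s := fun s y => hPmem s y
  have hPfix' : ∀ s, ∀ w ∈ W s, f (P s) w = w := fun s w hw => by
    have := congrArg (WithLp.toLp 2) (hPfix s w hw); exact this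
  have hPorth : ∀ s (y : EuclideanSpace ℝ (Fin d)), ∀ w ∈ W s, ⟪y - f (P s) y, w⟫ = 0 := by
    intro s y w hw
    rw [inner_sub_left, inner_f, hPsym, hPfix' s w hw, sub_self]
  have hPcontract : ∀ s (y : EuclideanSpace ℝ (Fin d)), ‖y - f (P s) y‖ ≤ ‖y‖ := by
    intro s y
    have h := hPorth s y (f (P s) y) (hPmem' s y)
    have e : ‖y‖ ^ 2 = ‖y - f (P s) y‖ ^ 2 + ‖f (P s) y‖ ^ 2 := by
      calc ‖y‖ ^ 2 = ‖(y - f (P s) y) + f (P s) y‖ ^ 2 := by rw [sub_add_cancel]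
        _ = _ := by rw [norm_add_sq_real, h]; ring
    nlinarith [norm_nonneg (y - f (P s) y), norm_nonneg y, norm_nonneg (f (P s) y)]
  -- P is idempotent as a matrix
  have hPP : ∀ s, P s * P s = P s := by
    intro s
    apply f_injective
    apply ContinuousLinearMap.ext
    intro y
    exact (f_mul_apply _ _ y).trans (hPfix' s _ (hPmem' s y))
  -- compute 1 - K s
  have h1K : ∀ s, (1 : Matrix (Fin d) (Fin d) ℝ) - K s = α • 1 + (1 - α) • P s := by
    intro s
    have hNt : ((1 : Matrix (Fin d) (Fin d) ℝ) - P s)ᵀ = 1 - P s := by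
      rw [Matrix.transpose_sub, Matrix.transpose_one, hPsym]
    have hNN : ((1 : Matrix (Fin d) (Fin d) ℝ) - P s) * (1 - P s) = 1 - P s := by
      have := hPP s
      noncomm_ring [this]
    have hc1 : (c + 1) ≠ 0 := by positivity
    have hc1' : (1 + c) ≠ 0 := by positivity
    have hrinv : (c • (1 : Matrix (Fin d) (Fin d) ℝ) + (1 - P s))
        * ((1/(c+1)) • (1 : Matrix (Fin d) (Fin d) ℝ) + (1/(c*(c+1))) • P s) = 1 := by
      have h1 : P s * P s = P s := hPP s
      simp only [add_mul, mul_add, sub_mul, mul_sub, Matrix.smul_mul, Matrix.mul_smul,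
        smul_smul, one_mul, mul_one, h1]
      match_scalars <;> field_simp <;> ring
    have hinv : (c • (1 : Matrix (Fin d) (Fin d) ℝ) + (1 - P s)ᵀ * (1 - P s))⁻¹
        = (1/(c+1)) • (1 : Matrix (Fin d) (Fin d) ℝ) + (1/(c*(c+1))) • P s := by
      rw [hNt, hNN]
      exact Matrix.inv_eq_right_inv hrinv
    rw [hK s, hinv, hNt, hNN]
    simp only [add_mul, mul_add, sub_mul, mul_sub, Matrix.smul_mul, Matrix.mul_smul,
      smul_smul, one_mul, mul_one, hPP s]
    match_scalars
    · rw [hα]; field_simp; try ring; try exact Or.inl trivial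
    · rw [hα]; field_simp; try ring; try exact Or.inl trivial
  -- the pulled-back projection error and the Z-component sequence
  set Qv : ℕ → EuclideanSpace ℝ (Fin d) :=
    fun s => f (Θ s)⁻¹ (f (P s) (f (Θ s) zperp)) with hQvdef
  set v : ℕ → EuclideanSpace ℝ (Fin d) :=
    fun s => zpar + ∑ i ∈ Finset.range s, ((1-α) * α^i) • Qv i with hvdef
  have hQv_eq : ∀ s, Qv s = f (Θ s)⁻¹ (f (P s) (f (Θ s) zperp)) := fun s => by rw [hQvdef]
  have hv_eq : ∀ s, v s = zpar + ∑ i ∈ Finset.range s, ((1-α) * α^i) • Qv i :=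
    fun s => by rw [hvdef]
  have hQvZ : ∀ s, Qv s ∈ Z := by
    intro s
    obtain ⟨a, haZ, hae⟩ := hWelim s _ (hPmem' s (f (Θ s) zperp))
    have : Qv s = a := by rw [hQv_eq, ← hae, hfinvΘ]
    rw [this]; exact haZ
  have hvZ : ∀ s, v s ∈ Z := by
    intro s
    rw [hv_eq]
    exact Z.add_mem hzpar (Submodule.sum_mem _ fun i _ => Z.smul_mem _ (hQvZ i))
  have hvsucc : ∀ s, v (s+1) = v s + ((1-α) * α^s) • Qv s := by
    intro s
    rw [hv_eq, hv_eq, Finset.sum_range_succ]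
    abel
  -- the key induction
  have he : ∀ s, q s - x s = f (Θ s) (v s + α^s • zperp) := by
    intro s; induction s with
    | zero =>
      rw [h0, hz, hΘ0, f_one_apply, hv_eq 0]
      simp
    | succ n ih =>
      have step1 : q (n+1) - x (n+1) = f (θ n) (f (1 - K n) (f (Θ n) (v n + α^n • zperp))) := by
        rw [hdyn n, ← WithLp.ofLp_sub 2 (q n) (x n), ih, ← f_mul_apply]; rfl
      have step2 : f (1 - K n) (f (Θ n) (v n + α^n • zperp))
          = f (Θ n) (α • (v n + α^n • zperp) + (1-α) • (v n + α^n • Qv n)) := by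
        rw [h1K n]
        have expand : f (α • (1 : Matrix (Fin d) (Fin d) ℝ) + (1 - α) • P n)
            = α • (1 : EuclideanSpace ℝ (Fin d) →L[ℝ] EuclideanSpace ℝ (Fin d))
              + (1-α) • f (P n) := by
          rw [f_add, f_smul, f_smul, f_one]
        rw [expand]
        rw [ContinuousLinearMap.add_apply, ContinuousLinearMap.smul_apply,
          ContinuousLinearMap.smul_apply, ContinuousLinearMap.one_apply]
        have hPy : f (P n) (f (Θ n) (v n + α^n • zperp))
            = f (Θ n) (v n + α^n • Qv n) := by
          simp only [_root_.map_add, _root_.map_smul]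
          rw [hPfix' n _ (hWmem n _ (hvZ n))]
          congr 1
          congr 1
          rw [hQv_eq]
          exact (hfΘinv n _).symm
        rw [hPy]
        simp only [_root_.map_add, _root_.map_smul, smul_add]
        try module
      have step3 : α • (v n + α^n • zperp) + (1-α) • (v n + α^n • Qv n)
          = v (n+1) + α^(n+1) • zperp := by
        rw [hvsucc n]
        module
      rw [step1, step2, step3, ← f_mul_apply, ← hΘsucc]
  -- Qv 0 = 0
  have hzperp' : ∀ u ∈ Z, ⟪u, zperp⟫ = 0 := (Submodule.mem_orthogonal Z zperp).mp hzperp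
  have hinv1 : (1 : Matrix (Fin d) (Fin d) ℝ)⁻¹ = 1 :=
    Matrix.inv_eq_right_inv (by rw [one_mul])
  have hQv0 : Qv 0 = 0 := by
    have hid : ∀ a : EuclideanSpace ℝ (Fin d),
        Matrix.toEuclideanLin (1 : Matrix (Fin d) (Fin d) ℝ) a = a := fun a => f_one_apply a
    have hW0 : W 0 = Z := by
      rw [hW 0, hΘ0]
      ext w
      simp only [Submodule.mem_map]
      constructor
      · rintro ⟨a, haZ, ha⟩
        rw [hid] at ha
        rwa [← ha]
      · intro hwZ
        exact ⟨w, hwZ, hid w⟩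
    have hgZ : f (P 0) zperp ∈ Z := hW0 ▸ hPmem' 0 zperp
    have h1 : ⟪zperp - f (P 0) zperp, f (P 0) zperp⟫ = 0 := hPorth 0 zperp _ (hPmem' 0 zperp)
    have h2 : ⟪zperp, f (P 0) zperp⟫ = 0 := by
      rw [real_inner_comm]; exact hzperp' _ hgZ
    have h3 : ⟪f (P 0) zperp, f (P 0) zperp⟫ = (0:ℝ) := by
      rw [inner_sub_left, h2] at h1; linarith
    have h4 : f (P 0) zperp = 0 := by
      rwa [inner_self_eq_zero] at h3
    rw [hQv_eq, hΘ0, hinv1, f_one_apply, f_one_apply, h4]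
  -- the key norm bound on Qv s
  have hQvle : ∀ s, ‖Qv s‖
      ≤ (spec (Θ s) * spec (Θ s)⁻¹) * spec (1 - (Θ s)ᵀ * Θ s) * ‖zperp‖ := by
    intro s
    have hgZ : Qv s ∈ Z := hQvZ s
    have hTg : f (Θ s) (Qv s) = f (P s) (f (Θ s) zperp) := by
      rw [hQv_eq]; exact hfΘinv s _
    have horthg : ⟪zperp, Qv s⟫ = 0 := by rw [real_inner_comm]; exact hzperp' _ hgZ
    have hperp : ⟪f (Θ s) (zperp - Qv s), f (Θ s) (Qv s)⟫ = 0 := by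
      rw [_root_.map_sub (f (Θ s)), hTg]
      exact hPorth s (f (Θ s) zperp) _ (hPmem' s _)
    have h3 : ⟪zperp - Qv s, f ((Θ s)ᵀ * Θ s) (Qv s)⟫ = 0 := by
      calc ⟪zperp - Qv s, f ((Θ s)ᵀ * Θ s) (Qv s)⟫
          = ⟪zperp - Qv s, f (Θ s)ᵀ (f (Θ s) (Qv s))⟫ := by rw [f_mul_apply]
        _ = ⟪f (Θ s) (zperp - Qv s), f (Θ s) (Qv s)⟫ := (inner_f _ _ _).symm
        _ = 0 := hperp
    have hkey : ‖Qv s‖^2 = ⟪Qv s - zperp, f (1 - (Θ s)ᵀ * Θ s) (Qv s)⟫ := by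
      have e1 : f (1 - (Θ s)ᵀ * Θ s) (Qv s) = Qv s - f ((Θ s)ᵀ * Θ s) (Qv s) := by
        rw [f_sub, ContinuousLinearMap.sub_apply, f_one, ContinuousLinearMap.one_apply]
      rw [e1, inner_sub_right, inner_sub_left, inner_sub_left, horthg,
        real_inner_self_eq_norm_sq]
      rw [inner_sub_left] at h3
      linarith
    have e2 : zperp - Qv s = f (Θ s)⁻¹ (f (Θ s) zperp - f (P s) (f (Θ s) zperp)) := by
      rw [_root_.map_sub (f (Θ s)⁻¹), hfinvΘ s, ← hTg, hfinvΘ s]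
    have hgw : ‖Qv s - zperp‖ ≤ spec (Θ s)⁻¹ * (spec (Θ s) * ‖zperp‖) := by
      rw [norm_sub_rev, e2]
      calc ‖f (Θ s)⁻¹ (f (Θ s) zperp - f (P s) (f (Θ s) zperp))‖
          ≤ spec (Θ s)⁻¹ * ‖f (Θ s) zperp - f (P s) (f (Θ s) zperp)‖ := norm_f_apply_le _ _
        _ ≤ spec (Θ s)⁻¹ * ‖f (Θ s) zperp‖ :=
            mul_le_mul_of_nonneg_left (hPcontract s _) (spec_nonneg _)
        _ ≤ spec (Θ s)⁻¹ * (spec (Θ s) * ‖zperp‖) :=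
            mul_le_mul_of_nonneg_left (norm_f_apply_le _ _) (spec_nonneg _)
    have hmain : ‖Qv s‖^2 ≤ (spec (Θ s)⁻¹ * (spec (Θ s) * ‖zperp‖))
        * (spec (1 - (Θ s)ᵀ * Θ s) * ‖Qv s‖) := by
      rw [hkey]
      calc ⟪Qv s - zperp, f (1 - (Θ s)ᵀ * Θ s) (Qv s)⟫
          ≤ ‖Qv s - zperp‖ * ‖f (1 - (Θ s)ᵀ * Θ s) (Qv s)‖ := real_inner_le_norm _ _
        _ ≤ _ := mul_le_mul hgw (norm_f_apply_le _ _) (norm_nonneg _)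
            (mul_nonneg (spec_nonneg _) (mul_nonneg (spec_nonneg _) (norm_nonneg _)))
    rcases eq_or_lt_of_le (norm_nonneg (Qv s)) with h0g | h0g
    · rw [← h0g]
      exact mul_nonneg (mul_nonneg (mul_nonneg (spec_nonneg _) (spec_nonneg _))
        (spec_nonneg _)) (norm_nonneg _)
    · have h5 : ‖Qv s‖ * ‖Qv s‖
          ≤ ((spec (Θ s) * spec (Θ s)⁻¹) * spec (1 - (Θ s)ᵀ * Θ s) * ‖zperp‖) * ‖Qv s‖ := by
        nlinarith
      exact le_of_mul_le_mul_right h5 h0g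
  -- γ bounds
  have hγs : ∀ s, s ≤ t → (spec (Θ s) * spec (Θ s)⁻¹) * spec (1 - (Θ s)ᵀ * Θ s) ≤ γ := by
    intro s hs
    have h1 : (spec (Θ s) * spec (Θ s)⁻¹) * spec (1 - (Θ s)ᵀ * Θ s)
        ≤ (1 + (spec (Θ s) * spec (Θ s)⁻¹)^2) * spec (1 - (Θ s)ᵀ * Θ s) := by
      apply mul_le_mul_of_nonneg_right _ (spec_nonneg _)
      nlinarith [sq_nonneg (spec (Θ s) * spec (Θ s)⁻¹ - 1)]
    refine h1.trans ?_
    rw [hγ]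
    exact Finset.le_sup'
      (fun s => (1 + (spec (Θ s) * spec (Θ s)⁻¹) ^ 2) * spec (1 - (Θ s)ᵀ * Θ s))
      (Finset.mem_Iic.mpr hs)
  have hγ0 : 0 ≤ γ := by
    refine le_trans ?_ (hγs 0 t.zero_le)
    exact mul_nonneg (mul_nonneg (spec_nonneg _) (spec_nonneg _)) (spec_nonneg _)
  have hQγ : ∀ s, s ≤ t → ‖Qv s‖ ≤ γ * ‖zperp‖ := by
    intro s hs
    refine (hQvle s).trans ?_
    exact mul_le_mul_of_nonneg_right (hγs s hs) (norm_nonneg _)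
  -- write t = m + 1
  obtain ⟨m, rfl⟩ : ∃ m, t = m + 1 := ⟨t - 1, (Nat.succ_pred_eq_of_pos ht).symm⟩
  -- bound on ‖v (m+1)‖
  have hDα : α - α^(m+1) = α * (1 - α^m) := by ring
  have hD0 : 0 ≤ α - α^(m+1) := by
    rw [hDα]
    have : α^m ≤ 1 := pow_le_one₀ hα0.le hα1.le
    nlinarith
  have hvt : ‖v (m+1)‖ ≤ ‖zpar‖ + γ * ‖zperp‖ * (α - α^(m+1)) := by
    have hsum0 : ∑ i ∈ Finset.range (m+1), ((1-α) * α^i) • Qv i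
        = ∑ i ∈ Finset.range m, ((1-α) * α^(i+1)) • Qv (i+1) := by
      rw [Finset.sum_range_succ']
      rw [hQv0, smul_zero, add_zero]
    have hnorm_sum : ‖∑ i ∈ Finset.range m, ((1-α) * α^(i+1)) • Qv (i+1)‖
        ≤ γ * ‖zperp‖ * (α - α^(m+1)) := by
      calc ‖∑ i ∈ Finset.range m, ((1-α) * α^(i+1)) • Qv (i+1)‖
          ≤ ∑ i ∈ Finset.range m, ‖((1-α) * α^(i+1)) • Qv (i+1)‖ := norm_sum_le _ _
        _ ≤ ∑ i ∈ Finset.range m, ((1-α) * α^(i+1)) * (γ * ‖zperp‖) := by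
            apply Finset.sum_le_sum
            intro i hi
            rw [norm_smul, Real.norm_eq_abs,
              abs_of_nonneg (by nlinarith [pow_pos hα0 (i+1)] : (0:ℝ) ≤ (1-α) * α^(i+1))]
            apply mul_le_mul_of_nonneg_left _ (by nlinarith [pow_pos hα0 (i+1)])
            apply hQγ
            have := Finset.mem_range.mp hi
            omega
        _ = (γ * ‖zperp‖ * ((1-α) * α)) * ∑ i ∈ Finset.range m, α^i := by
            rw [Finset.mul_sum]
            apply Finset.sum_congr rfl
            intro i _
            ring
        _ = γ * ‖zperp‖ * (α - α^(m+1)) := by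
            have hg := geom_sum_mul α m
            linear_combination (-(γ * ‖zperp‖ * α)) * hg
    calc ‖v (m+1)‖ ≤ ‖zpar‖ + ‖∑ i ∈ Finset.range (m+1), ((1-α) * α^i) • Qv i‖ := by
          rw [hv_eq]; exact norm_add_le _ _
      _ ≤ ‖zpar‖ + γ * ‖zperp‖ * (α - α^(m+1)) := by
          rw [hsum0]; linarith [hnorm_sum]
  -- Pythagoras
  have hinner_vz : ⟪v (m+1), α^(m+1) • zperp⟫ = 0 := by
    rw [real_inner_smul_right, hzperp' _ (hvZ (m+1)), mul_zero]
  have hnu : ‖v (m+1) + α^(m+1) • zperp‖^2 = ‖v (m+1)‖^2 + (α^(m+1))^2 * ‖zperp‖^2 := by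
    rw [norm_add_sq_real, hinner_vz, norm_smul, Real.norm_eq_abs,
      abs_of_nonneg (by positivity : (0:ℝ) ≤ α^(m+1))]
    ring
  have hz2 : ‖z‖^2 = ‖zpar‖^2 + ‖zperp‖^2 := by
    rw [hz, norm_add_sq_real, hzperp' _ hzpar]
    ring
  -- assemble
  have hfinal1 : ‖q (m+1) - x (m+1)‖ ≤ spec (Θ (m+1)) * ‖v (m+1) + α^(m+1) • zperp‖ := by
    rw [he (m+1)]
    exact norm_f_apply_le _ _
  have hAnn : 0 ≤ spec (Θ (m+1)) := spec_nonneg _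
  have hsq : ‖q (m+1) - x (m+1)‖^2 ≤ spec (Θ (m+1))^2 * ‖v (m+1) + α^(m+1) • zperp‖^2 := by
    calc ‖q (m+1) - x (m+1)‖^2 ≤ (spec (Θ (m+1)) * ‖v (m+1) + α^(m+1) • zperp‖)^2 := by
          apply pow_le_pow_left₀ (norm_nonneg _) hfinal1
      _ = _ := by ring
  have hm1 : m + 1 - 1 = m := by omega
  rw [hm1]
  have hvt2 : ‖v (m+1)‖^2 ≤ (‖zpar‖ + γ * ‖zperp‖ * (α - α^(m+1)))^2 :=
    pow_le_pow_left₀ (norm_nonneg _) hvt 2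
  have hpow2 : α^(2*(m+1)) = (α^(m+1))^2 := by
    rw [two_mul, pow_add, sq]
  have hsq' : (α - α^(m+1))^2 = α^2 * (1 - α^m)^2 := by
    rw [hDα]; ring
  have hinner_bound : ‖v (m+1) + α^(m+1) • zperp‖^2
      ≤ α^(2*(m+1)) * ‖zperp‖^2 + ‖zpar‖^2
        + γ * ‖z‖^2 * (γ * α^2 * (1 - α^m)^2 + 2 * (α - α^(m+1))) := by
    rw [hnu, hpow2, hz2,
      show γ * α^2 * (1-α^m)^2 = γ * (α - α^(m+1))^2 by linear_combination γ * hsq']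
    have h1 := mul_nonneg (mul_nonneg hγ0 hD0) (sq_nonneg (‖zpar‖ - ‖zperp‖))
    have h2 := mul_nonneg (mul_nonneg hγ0 hD0) (sq_nonneg (‖zpar‖ : ℝ))
    have h3 := mul_nonneg (mul_nonneg hγ0 hD0) (sq_nonneg (‖zperp‖ : ℝ))
    have h4 := mul_nonneg (mul_nonneg (mul_nonneg hγ0 hγ0) (mul_nonneg hD0 hD0))
      (sq_nonneg (‖zpar‖ : ℝ))
    nlinarith [hvt2]
  calc ‖q (m+1) - x (m+1)‖^2 ≤ spec (Θ (m+1))^2 * ‖v (m+1) + α^(m+1) • zperp‖^2 := hsq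
    _ ≤ spec (Θ (m+1))^2 * (α^(2*(m+1)) * ‖zperp‖^2 + ‖zpar‖^2
        + γ * ‖z‖^2 * (γ * α^2 * (1 - α^m)^2 + 2 * (α - α^(m+1)))) :=
        mul_le_mul_of_nonneg_left hinner_bound (by positivity)
end

section
/- Let M* be the manifold {x ∈ ℝ^d : Ax = 0, |cᵀx| ≥ δ} contained in the linear subspace M = {x : Ax = 0}, and let E : ℝ^d → M be the orthogonal projection onto M. For any linear classifier F on ℝ^d, the manifold margin d_M(F) equals the Euclidean margin of the composed classifier F∘E: d_M(F) = d_e(F∘E). -/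
open Matrix

private lemma sign_pos_mul (α p : ℝ) (hα : 0 < α) : Real.sign (α * p) = Real.sign p := by
  rcases lt_trichotomy p 0 with h | h | h
  · rw [Real.sign_of_neg h, Real.sign_of_neg (mul_neg_of_pos_of_neg hα h)]
  · simp [h, Real.sign_zero]
  · rw [Real.sign_of_pos h, Real.sign_of_pos (mul_pos hα h)]

private lemma sign_mul_eq (α p q : ℝ) (hα : α ≠ 0) (h : Real.sign p = Real.sign q) :
    Real.sign (α * p) = Real.sign (α * q) := by
  rcases hα.lt_or_gt with h' | h'
  · rw [show α * p = -(-α * p) by ring, show α * q = -(-α * q) by ring,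
      Real.sign_neg, Real.sign_neg, sign_pos_mul _ _ (by linarith), sign_pos_mul _ _ (by linarith), h]
  · rw [sign_pos_mul _ _ h', sign_pos_mul _ _ h', h]

private lemma sign_mul_eq_iff (α p q : ℝ) (hα : α ≠ 0) :
    Real.sign (α * p) = Real.sign (α * q) ↔ Real.sign p = Real.sign q := by
  refine ⟨fun h => ?_, sign_mul_eq α p q hα⟩
  have := sign_mul_eq α⁻¹ _ _ (inv_ne_zero hα) h
  rwa [show α⁻¹ * (α * p) = p by field_simp, show α⁻¹ * (α * q) = q by field_simp] at this

private lemma abs_le_abs_sub_of_sign_ne (p q : ℝ) (hp : p ≠ 0)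
    (h : Real.sign p ≠ Real.sign q) : |p| ≤ |p - q| := by
  rcases hp.lt_or_gt with h' | h'
  · have hq : 0 ≤ q := by
      by_contra hq
      push_neg at hq
      rw [Real.sign_of_neg h', Real.sign_of_neg hq] at h
      exact h rfl
    rw [abs_of_neg h', abs_of_nonpos (by linarith)]
    linarith
  · have hq : q ≤ 0 := by
      by_contra hq
      push_neg at hq
      rw [Real.sign_of_pos h', Real.sign_of_pos hq] at h
      exact h rfl
    rw [abs_of_pos h', abs_of_nonneg (by linarith)]
    linarith

set_option maxHeartbeats 2000000 in
/-- Let `M* = {x : Ax = 0, |cᵀx| ≥ δ}` be contained in the linear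
subspace `M = {x : Ax = 0}`, `E` the orthogonal projection onto `M`, and
`F(x) = sign(n̂ᵀx)` a linear classifier.  Then the manifold margin equals the
Euclidean margin of the composed classifier: `d_M(F) = d_e(F ∘ E)`. -/
theorem stmt_11 (d m : ℕ) (A : Matrix (Fin m) (Fin d) ℝ)
    (cvec : EuclideanSpace ℝ (Fin d)) (δ : ℝ)
    (M : Submodule ℝ (EuclideanSpace ℝ (Fin d)))
    (hM : M = LinearMap.ker (Matrix.toEuclideanLin A))
    (Mstar : Set (EuclideanSpace ℝ (Fin d)))
    (hMstar : Mstar = {x : EuclideanSpace ℝ (Fin d) | A.mulVec (WithLp.ofLp x) = 0 ∧ δ ≤ |inner ℝ cvec x|})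
    (nhat : EuclideanSpace ℝ (Fin d))
    (F : EuclideanSpace ℝ (Fin d) → ℝ)
    (hF : ∀ x, F x = Real.sign (inner ℝ nhat x))
    (E : EuclideanSpace ℝ (Fin d) → EuclideanSpace ℝ (Fin d))
    (hE : ∀ x, E x = (Submodule.orthogonalProjectionOnto M x : EuclideanSpace ℝ (Fin d))) :
    (1 / 2) * sInf {s : ℝ | ∃ x₁ ∈ Mstar, ∃ x₂ ∈ Mstar, F x₁ ≠ F x₂ ∧ s = ‖x₁ - x₂‖}
      = sInf {s : ℝ | ∃ x ∈ Mstar, ∃ dlt : EuclideanSpace ℝ (Fin d),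
          F (E x) ≠ F (E (x + dlt)) ∧ s = ‖dlt‖} := by
  set T₁ := {s : ℝ | ∃ x₁ ∈ Mstar, ∃ x₂ ∈ Mstar, F x₁ ≠ F x₂ ∧ s = ‖x₁ - x₂‖} with hT₁def
  set T₂ := {s : ℝ | ∃ x ∈ Mstar, ∃ dlt : EuclideanSpace ℝ (Fin d),
      F (E x) ≠ F (E (x + dlt)) ∧ s = ‖dlt‖} with hT₂def
  have hmem : ∀ y : EuclideanSpace ℝ (Fin d),
      y ∈ Mstar ↔ (y ∈ M ∧ δ ≤ |(inner ℝ cvec y : ℝ)|) := by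
    intro y
    rw [hMstar, hM]
    simp only [Set.mem_setOf_eq, LinearMap.mem_ker]
    exact and_congr_left' ⟨fun h => by rw [Matrix.toEuclideanLin_apply, h]; rfl, fun h => congrArg WithLp.ofLp h⟩
  have hEid : ∀ y, y ∈ M → E y = y := by
    intro y hy
    rw [hE]
    exact Submodule.starProjection_eq_self_iff.mpr hy
  have hEadd : ∀ x, x ∈ M → ∀ dlt, E (x + dlt)
      = x + (Submodule.orthogonalProjectionOnto M dlt : EuclideanSpace ℝ (Fin d)) := by
    intro x hx dlt
    rw [hE, map_add, Submodule.coe_add, Submodule.coe_orthogonalProjectionOnto_apply, Submodule.starProjection_eq_self_iff.mpr hx]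
  have hnormP : ∀ dlt : EuclideanSpace ℝ (Fin d),
      ‖(Submodule.orthogonalProjectionOnto M dlt : EuclideanSpace ℝ (Fin d))‖ ≤ ‖dlt‖ := by
    intro dlt
    have h1 := (Submodule.orthogonalProjectionOnto M).le_opNorm dlt
    have h2 := Submodule.orthogonalProjectionOnto_norm_le M
    have h3 : ‖(Submodule.orthogonalProjectionOnto M dlt : EuclideanSpace ℝ (Fin d))‖
        = ‖Submodule.orthogonalProjectionOnto M dlt‖ := rfl
    nlinarith [norm_nonneg dlt]
  have bdd₁ : BddBelow T₁ := by
    refine ⟨0, ?_⟩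
    rintro a ⟨x₁, _, x₂, _, _, rfl⟩
    exact norm_nonneg _
  have bdd₂ : BddBelow T₂ := by
    refine ⟨0, ?_⟩
    rintro a ⟨x, _, dlt, _, rfl⟩
    exact norm_nonneg _
  -- the "easy" direction: any margin pair yields a perturbation of half the size
  have easy : ∀ a ∈ T₁, a / 2 ∈ T₂ := by
    rintro a ⟨x₁, hx₁, x₂, hx₂, hne, rfl⟩
    have hx₁M : x₁ ∈ M := ((hmem x₁).1 hx₁).1
    have hx₂M : x₂ ∈ M := ((hmem x₂).1 hx₂).1
    by_cases hcase : F (x₁ + (2⁻¹ : ℝ) • (x₂ - x₁)) = F x₁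
    · -- use x₂ as a base point
      refine ⟨x₂, hx₂, (2⁻¹ : ℝ) • (x₁ - x₂), ?_, ?_⟩
      · have hmm : x₂ + (2⁻¹ : ℝ) • (x₁ - x₂) ∈ M :=
          add_mem hx₂M (Submodule.smul_mem _ _ (sub_mem hx₁M hx₂M))
        rw [hEid _ hx₂M, hEid _ hmm,
          show x₂ + (2⁻¹ : ℝ) • (x₁ - x₂) = x₁ + (2⁻¹ : ℝ) • (x₂ - x₁) by module, hcase]
        exact fun h => hne h.symm
      · rw [norm_smul]
        simp
        ring
    · refine ⟨x₁, hx₁, (2⁻¹ : ℝ) • (x₂ - x₁), ?_, ?_⟩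
      · have hmm : x₁ + (2⁻¹ : ℝ) • (x₂ - x₁) ∈ M :=
          add_mem hx₁M (Submodule.smul_mem _ _ (sub_mem hx₂M hx₁M))
        rw [hEid _ hx₁M, hEid _ hmm]
        exact fun h => hcase h.symm
      · rw [norm_smul, norm_sub_rev x₂ x₁]
        simp
        ring
  by_cases hT₂ne : T₂.Nonempty
  · -- main case
    obtain ⟨b₀, x₀, hx₀, dlt₀, hne₀, hb₀⟩ := hT₂ne
    have hx₀M : x₀ ∈ M := ((hmem x₀).1 hx₀).1
    set v₀ := (Submodule.orthogonalProjectionOnto M dlt₀ : EuclideanSpace ℝ (Fin d)) with hv₀def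
    have hv₀M : v₀ ∈ M := SetLike.coe_mem _
    have hne₀' : Real.sign (inner ℝ nhat x₀ : ℝ) ≠ Real.sign (inner ℝ nhat (x₀ + v₀) : ℝ) := by
      rw [hEid _ hx₀M, hEadd _ hx₀M, hF, hF] at hne₀
      exact hne₀
    by_cases hcaseA : ∃ w, w ∈ M ∧ (inner ℝ cvec w : ℝ) = 0 ∧ (inner ℝ nhat w : ℝ) ≠ 0
    · -- Case A: both infima are zero
      obtain ⟨w, hwM, hwc, hwn⟩ := hcaseA
      have hw0 : w ≠ 0 := fun h => hwn (by rw [h, inner_zero_right])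
      have hwpos : (0 : ℝ) < ‖w‖ := norm_pos_iff.mpr hw0
      have hhabs : (0 : ℝ) < |(inner ℝ nhat w : ℝ)| := abs_pos.mpr hwn
      have key : ∀ ε : ℝ, 0 < ε → ε ∈ T₁ ∧ ε ∈ T₂ := by
        intro ε hε
        set h := (inner ℝ nhat w : ℝ) with hhdef
        set s₀ := (inner ℝ nhat x₀ : ℝ) with hs₀def
        set η := ε * |h| / (2 * ‖w‖) with hηdef
        have hη : 0 < η := by positivity
        set y₁ := x₀ + ((η - s₀) / h) • w with hy₁def
        set y₂ := x₀ + ((-η - s₀) / h) • w with hy₂def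
        have hy₁M : y₁ ∈ M := add_mem hx₀M (Submodule.smul_mem _ _ hwM)
        have hy₂M : y₂ ∈ M := add_mem hx₀M (Submodule.smul_mem _ _ hwM)
        have hinner : ∀ t : ℝ, (inner ℝ cvec (x₀ + t • w) : ℝ) = inner ℝ cvec x₀ := by
          intro t
          rw [inner_add_right, real_inner_smul_right, hwc]
          ring
        have hy₁star : y₁ ∈ Mstar :=
          (hmem y₁).2 ⟨hy₁M, by rw [hy₁def, hinner]; exact ((hmem x₀).1 hx₀).2⟩
        have hy₂star : y₂ ∈ Mstar :=
          (hmem y₂).2 ⟨hy₂M, by rw [hy₂def, hinner]; exact ((hmem x₀).1 hx₀).2⟩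
        have hhne : h ≠ 0 := hwn
        have hny₁ : (inner ℝ nhat y₁ : ℝ) = η := by
          rw [hy₁def, inner_add_right, real_inner_smul_right, ← hhdef, ← hs₀def]
          field_simp
          ring
        have hny₂ : (inner ℝ nhat y₂ : ℝ) = -η := by
          rw [hy₂def, inner_add_right, real_inner_smul_right, ← hhdef, ← hs₀def]
          field_simp
          ring
        have hFy : F y₁ ≠ F y₂ := by
          rw [hF, hF, hny₁, hny₂, Real.sign_of_pos hη, Real.sign_of_neg (by linarith)]
          norm_num
        have hdiff : y₂ - y₁ = (((-η - s₀) / h) - ((η - s₀) / h)) • w := by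
          rw [hy₁def, hy₂def, sub_smul]
          module
        have hnormdiff : ‖y₂ - y₁‖ = ε := by
          rw [hdiff, norm_smul]
          have : ((-η - s₀) / h) - ((η - s₀) / h) = -(2 * η) / h := by
            field_simp
            ring
          rw [this]
          rw [Real.norm_eq_abs, abs_div, abs_neg]
          rw [hηdef]
          rw [abs_of_pos (by positivity : (0:ℝ) < 2 * (ε * |h| / (2 * ‖w‖)))]
          field_simp
        constructor
        · exact ⟨y₁, hy₁star, y₂, hy₂star, hFy, by rw [norm_sub_rev, hnormdiff]⟩
        · refine ⟨y₁, hy₁star, y₂ - y₁, ?_, hnormdiff.symm⟩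
          have hdM : y₂ - y₁ ∈ M := sub_mem hy₂M hy₁M
          rw [hEid _ hy₁M, hEid _ (by rw [add_sub_cancel]; exact hy₂M : y₁ + (y₂ - y₁) ∈ M),
            add_sub_cancel]
          exact hFy
      have hT₁0 : sInf T₁ = 0 := by
        refine le_antisymm ?_ (Real.sInf_nonneg ?_)
        · refine le_of_forall_pos_le_add ?_
          intro ε hε
          have := csInf_le bdd₁ (key ε hε).1
          linarith
        · rintro a ⟨x₁, _, x₂, _, _, rfl⟩
          exact norm_nonneg _
      have hT₂0 : sInf T₂ = 0 := by
        refine le_antisymm ?_ (Real.sInf_nonneg ?_)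
        · refine le_of_forall_pos_le_add ?_
          intro ε hε
          have := csInf_le bdd₂ (key ε hε).2
          linarith
        · rintro a ⟨x, _, dlt, _, rfl⟩
          exact norm_nonneg _
      rw [hT₁0, hT₂0]
      ring
    · -- Case B: on M, the classifier is a multiple of the constraint functional
      push_neg at hcaseA
      set cM := (Submodule.orthogonalProjectionOnto M cvec : EuclideanSpace ℝ (Fin d)) with hcMdef
      have hcMM : cM ∈ M := SetLike.coe_mem _
      have hccM : ∀ y, y ∈ M → (inner ℝ cvec y : ℝ) = inner ℝ cM y := by
        intro y hy
        rw [hcMdef, Submodule.coe_orthogonalProjectionOnto_apply, Submodule.inner_starProjection_left_eq_right,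
          Submodule.starProjection_eq_self_iff.mpr hy]
      by_cases hcM0 : cM = 0
      · exfalso
        have hall : ∀ y, y ∈ M → (inner ℝ nhat y : ℝ) = 0 := by
          intro y hy
          exact hcaseA y hy (by rw [hccM y hy, hcM0, inner_zero_left])
        apply hne₀'
        rw [hall x₀ hx₀M, hall _ (add_mem hx₀M hv₀M)]
      have hcMpos : (0 : ℝ) < ‖cM‖ := norm_pos_iff.mpr hcM0
      have hccMself : (inner ℝ cvec cM : ℝ) = ‖cM‖ ^ 2 := by
        rw [hccM cM hcMM, real_inner_self_eq_norm_sq]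
      set α := (inner ℝ nhat cM : ℝ) / ‖cM‖ ^ 2 with hαdef
      have hαrel : ∀ y, y ∈ M → (inner ℝ nhat y : ℝ) = α * inner ℝ cvec y := by
        intro y hy
        have hwmem : y - ((inner ℝ cvec y : ℝ) / ‖cM‖ ^ 2) • cM ∈ M :=
          sub_mem hy (Submodule.smul_mem _ _ hcMM)
        have h1 : (inner ℝ cvec (y - ((inner ℝ cvec y : ℝ) / ‖cM‖ ^ 2) • cM) : ℝ) = 0 := by
          rw [inner_sub_right, real_inner_smul_right, hccMself]
          field_simp
          ring
        have h2 := hcaseA _ hwmem h1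
        rw [inner_sub_right, real_inner_smul_right] at h2
        rw [hαdef]
        field_simp at h2 ⊢
        linarith
      -- per-witness construction
      have construct : ∀ x, x ∈ Mstar → ∀ v, v ∈ M →
          Real.sign (inner ℝ nhat x : ℝ) ≠ Real.sign (inner ℝ nhat (x + v) : ℝ) →
          ∃ a ∈ T₁, a ≤ 2 * ‖v‖ := by
        intro x hx v hv hne
        obtain ⟨hxM, hxδ⟩ := (hmem x).1 hx
        set p := (inner ℝ cvec x : ℝ) with hpdef
        set q := (inner ℝ cvec (x + v) : ℝ) with hqdef
        rw [hαrel x hxM, hαrel _ (add_mem hxM hv), ← hpdef, ← hqdef] at hne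
        have hα0 : α ≠ 0 := by
          rintro h
          rw [h, zero_mul, zero_mul] at hne
          exact hne rfl
        have hpq : Real.sign p ≠ Real.sign q := fun h => hne (sign_mul_eq α p q hα0 h)
        set r := if p = 0 then q else -p with hrdef
        have hrδ : δ ≤ |r| := by
          by_cases hp : p = 0
          · rw [hrdef, if_pos hp]
            rw [hp, abs_zero] at hxδ
            exact le_trans hxδ (abs_nonneg q)
          · rw [hrdef, if_neg hp, abs_neg]
            exact hxδ
        have hrsign : Real.sign r ≠ Real.sign p := by
          by_cases hp : p = 0
          · rw [hrdef, if_pos hp]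
            exact fun h => hpq h.symm
          · rw [hrdef, if_neg hp, Real.sign_neg]
            intro h
            have : Real.sign p = 0 := by linarith
            exact hp (Real.sign_eq_zero_iff.mp this)
        have hrbound : |r - p| ≤ 2 * |q - p| := by
          by_cases hp : p = 0
          · rw [hrdef, if_pos hp]
            have := abs_nonneg (q - p)
            linarith
          · rw [hrdef, if_neg hp]
            have h1 : |p| ≤ |p - q| := abs_le_abs_sub_of_sign_ne p q hp hpq
            rw [abs_sub_comm p q] at h1
            have h2 : |(-p : ℝ) - p| = 2 * |p| := by
              rw [show (-p : ℝ) - p = -(2 * p) by ring, abs_neg, abs_mul]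
              norm_num
            rw [h2]
            linarith
        set y₂ := x + ((r - p) / ‖cM‖ ^ 2) • cM with hy₂def
        have hy₂M : y₂ ∈ M := add_mem hxM (Submodule.smul_mem _ _ hcMM)
        have hcy₂ : (inner ℝ cvec y₂ : ℝ) = r := by
          rw [hy₂def, inner_add_right, real_inner_smul_right, hccMself, ← hpdef]
          field_simp
          ring
        have hy₂star : y₂ ∈ Mstar := (hmem y₂).2 ⟨hy₂M, by rw [hcy₂]; exact hrδ⟩
        have hFne : F x ≠ F y₂ := by
          rw [hF, hF, hαrel x hxM, hαrel y₂ hy₂M, hcy₂, ← hpdef]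
          intro h
          exact hrsign ((sign_mul_eq_iff α p r hα0).mp h).symm
        refine ⟨‖x - y₂‖, ⟨x, hx, y₂, hy₂star, hFne, rfl⟩, ?_⟩
        have hxy : x - y₂ = (-((r - p) / ‖cM‖ ^ 2)) • cM := by
          rw [hy₂def, neg_smul]
          module
        have hqp : q - p = (inner ℝ cvec v : ℝ) := by
          rw [hqdef, hpdef, inner_add_right]
          ring
        have hcs : |q - p| ≤ ‖cM‖ * ‖v‖ := by
          rw [hqp, hccM v hv]
          exact abs_real_inner_le_norm cM v
        rw [hxy, norm_smul, Real.norm_eq_abs, abs_neg, abs_div, abs_of_nonneg (by positivity : (0:ℝ) ≤ ‖cM‖ ^ 2)]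
        rw [div_mul_eq_mul_div, div_le_iff₀ (by positivity : (0:ℝ) < ‖cM‖ ^ 2)]
        have hstep : |r - p| ≤ 2 * (‖cM‖ * ‖v‖) := le_trans hrbound (by linarith)
        calc |r - p| * ‖cM‖ ≤ (2 * (‖cM‖ * ‖v‖)) * ‖cM‖ :=
              mul_le_mul_of_nonneg_right hstep (le_of_lt hcMpos)
          _ = 2 * ‖v‖ * ‖cM‖ ^ 2 := by ring
      -- T₁ is nonempty
      have hT₁ne : T₁.Nonempty := by
        obtain ⟨a, ha, _⟩ := construct x₀ hx₀ v₀ hv₀M hne₀'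
        exact ⟨a, ha⟩
      have hT₂ne' : T₂.Nonempty := ⟨b₀, x₀, hx₀, dlt₀, hne₀, hb₀⟩
      have h_le : (1 / 2 : ℝ) * sInf T₁ ≤ sInf T₂ := by
        refine le_csInf hT₂ne' ?_
        rintro b ⟨x, hx, dlt, hne, rfl⟩
        have hxM : x ∈ M := ((hmem x).1 hx).1
        set v := (Submodule.orthogonalProjectionOnto M dlt : EuclideanSpace ℝ (Fin d)) with hvdef
        have hvM : v ∈ M := SetLike.coe_mem _
        have hne' : Real.sign (inner ℝ nhat x : ℝ) ≠ Real.sign (inner ℝ nhat (x + v) : ℝ) := by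
          rw [hEid _ hxM, hEadd _ hxM, hF, hF] at hne
          exact hne
        obtain ⟨a, ha, hab⟩ := construct x hx v hvM hne'
        have h1 := csInf_le bdd₁ ha
        have h2 := hnormP dlt
        rw [← hvdef] at h2
        linarith
      have h_ge : sInf T₂ ≤ (1 / 2 : ℝ) * sInf T₁ := by
        have h2 : 2 * sInf T₂ ≤ sInf T₁ := by
          refine le_csInf hT₁ne ?_
          intro a ha
          have := csInf_le bdd₂ (easy a ha)
          linarith
        linarith
      exact le_antisymm h_le h_ge
  · -- both sets are empty
    have hT₁e : T₁ = ∅ := by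
      rw [Set.eq_empty_iff_forall_notMem]
      intro a ha
      exact hT₂ne ⟨a / 2, easy a ha⟩
    have hT₂e : T₂ = ∅ := Set.not_nonempty_iff_eq_empty.mp hT₂ne
    rw [hT₁e, hT₂e, Real.sInf_empty]
    ring
end

section
/- Let M ⊆ ℝ^d be an r-dimensional linear subspace and let F be a linear classifier with a random decision boundary, i.e., with unit normal direction determined by n̂ ∼ N(0, (1/d)I). Then the expected ratio of Euclidean margin to manifold margin satisfies E[d_e(F)/d_M(F)] ≤ √(r/d). -/
open Matrix MeasureTheory ProbabilityTheory

lemma cs_abs {ι : Type*} [Fintype ι] (f g : ι → ℝ) :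
    |∑ i, f i * g i| ≤ Real.sqrt (∑ i, f i ^ 2) * Real.sqrt (∑ i, g i ^ 2) := by
  have h := Finset.sum_mul_sq_le_sq_mul_sq Finset.univ f g
  have h2 : |∑ i, f i * g i| = Real.sqrt ((∑ i, f i * g i) ^ 2) := by
    rw [Real.sqrt_sq_eq_abs]
  rw [h2, ← Real.sqrt_mul (by positivity)]
  exact Real.sqrt_le_sqrt h

lemma sum_n_mul {d r : ℕ} (V : Matrix (Fin d) (Fin r) ℝ) (n : Fin d → ℝ) (c : Fin r → ℝ) :
    ∑ i, n i * (∑ j, V i j * c j) = ∑ j, (∑ i, V i j * n i) * c j := by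
  simp_rw [Finset.mul_sum, Finset.sum_mul]
  rw [Finset.sum_comm]
  congr 1; ext i; congr 1; ext j; ring

/-- Orthonormal columns preserve sums of squares. -/
lemma sq_sum_image {d r : ℕ} (V : Matrix (Fin d) (Fin r) ℝ) (hV : Vᵀ * V = 1)
    (c : Fin r → ℝ) :
    ∑ i, (∑ j, V i j * c j) ^ 2 = ∑ j, c j ^ 2 := by
  have key : ∀ j j', ∑ i, V i j * V i j' = if j = j' then 1 else 0 := by
    intro j j'
    have := congrFun (congrFun hV j) j'
    simpa [Matrix.mul_apply, Matrix.one_apply, Matrix.transpose_apply] using this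
  calc ∑ i, (∑ j, V i j * c j) ^ 2
      = ∑ i, ∑ j, ∑ j', (V i j * c j) * (V i j' * c j') := by
        congr 1; ext i; rw [sq, Finset.sum_mul_sum]
    _ = ∑ j, ∑ j', (c j * c j') * ∑ i, V i j * V i j' := by
        rw [Finset.sum_comm]; congr 1; ext j
        rw [Finset.sum_comm]; congr 1; ext j'
        rw [Finset.mul_sum]; congr 1; ext i; ring
    _ = ∑ j, c j ^ 2 := by
        simp_rw [key]
        congr 1; ext j
        rw [Finset.sum_eq_single j]
        · simp [sq]
        · intro j' _ hj'; simp [Ne.symm hj']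
        · simp

/-- The projection bound: `‖Vᵀ n‖² ≤ ‖n‖²`. -/
lemma proj_bound {d r : ℕ} (V : Matrix (Fin d) (Fin r) ℝ) (hV : Vᵀ * V = 1)
    (n : Fin d → ℝ) :
    ∑ j, (∑ i, V i j * n i) ^ 2 ≤ ∑ i, n i ^ 2 := by
  set c : Fin r → ℝ := fun j => ∑ i, V i j * n i with hc
  set m : Fin d → ℝ := fun i => ∑ j, V i j * c j with hm
  have h1 : ∑ j, c j ^ 2 = ∑ i, n i * m i := by
    rw [sum_n_mul V n c]; congr 1; ext j; rw [sq]
  have h2 : ∑ i, m i ^ 2 = ∑ j, c j ^ 2 := sq_sum_image V hV c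
  have h3 : ∑ i, n i * m i ≤ Real.sqrt (∑ i, n i ^ 2) * Real.sqrt (∑ i, m i ^ 2) :=
    le_trans (le_abs_self _) (cs_abs n m)
  rw [h2] at h3
  rcases eq_or_lt_of_le (show (0:ℝ) ≤ ∑ j, c j ^ 2 by positivity) with h0 | h0
  · rw [← h0]; positivity
  · -- c² ≤ √q √c² ⇒ √c² ≤ √q ⇒ c² ≤ q
    have hs : Real.sqrt (∑ j, c j ^ 2) > 0 := Real.sqrt_pos.mpr h0
    have h4 : ∑ j, c j ^ 2 ≤ Real.sqrt (∑ i, n i ^ 2) * Real.sqrt (∑ j, c j ^ 2) :=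
      h1.trans_le h3
    have h5 : Real.sqrt (∑ j, c j ^ 2) ≤ Real.sqrt (∑ i, n i ^ 2) := by
      have h4' : Real.sqrt (∑ j, c j ^ 2) * Real.sqrt (∑ j, c j ^ 2)
          ≤ Real.sqrt (∑ i, n i ^ 2) * Real.sqrt (∑ j, c j ^ 2) := by
        rwa [Real.mul_self_sqrt (by positivity)]
      exact le_of_mul_le_mul_right h4' hs
    calc ∑ j, c j ^ 2 = Real.sqrt (∑ j, c j ^ 2) * Real.sqrt (∑ j, c j ^ 2) :=
          (Real.mul_self_sqrt (by positivity)).symm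
      _ ≤ Real.sqrt (∑ i, n i ^ 2) * Real.sqrt (∑ i, n i ^ 2) := by
          apply mul_le_mul h5 h5 (by positivity) (by positivity)
      _ = ∑ i, n i ^ 2 := Real.mul_self_sqrt (by positivity)

lemma sign_ne_mul_nonpos {a b : ℝ} (h : Real.sign a ≠ Real.sign b) : a * b ≤ 0 := by
  by_contra hab
  push_neg at hab
  rcases mul_pos_iff.mp hab with ⟨ha, hb⟩ | ⟨ha, hb⟩
  · rw [Real.sign_of_pos ha, Real.sign_of_pos hb] at h; exact h rfl
  · rw [Real.sign_of_neg ha, Real.sign_of_neg hb] at h; exact h rfl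

lemma min_abs_le {a b : ℝ} (hab : a * b ≤ 0) : 2 * min |a| |b| ≤ |a - b| := by
  have habs : |a - b| = |a| + |b| := by
    rcases mul_nonpos_iff.mp hab with ⟨ha, hb⟩ | ⟨ha, hb⟩
    · rw [abs_of_nonneg ha, abs_of_nonpos hb]; rw [abs_of_nonneg (by linarith)]; ring
    · rw [abs_of_nonpos ha, abs_of_nonneg hb]; rw [abs_of_nonpos (by linarith)]; ring
  rw [habs]
  have := min_le_left |a| |b|
  have := min_le_right |a| |b|
  linarith

lemma eunorm {d : ℕ} (x : EuclideanSpace ℝ (Fin d)) :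
    ‖x‖ = Real.sqrt (∑ i, (x i) ^ 2) := by
  rw [EuclideanSpace.norm_eq]
  congr 1
  exact Finset.sum_congr rfl fun i _ => by rw [Real.norm_eq_abs, sq_abs]

lemma pointwise_bound {d r : ℕ} (V : Matrix (Fin d) (Fin r) ℝ) (hV : Vᵀ * V = 1)
    (D : Set (EuclideanSpace ℝ (Fin d)))
    (hrep : ∀ x ∈ D, ∃ c : Fin r → ℝ, ∀ i, x i = ∑ j, V i j * c j)
    (de dM : (Fin d → ℝ) → ℝ)
    (hde : ∀ n, de n = sInf {s : ℝ | ∃ x ∈ D, ∃ dlt : EuclideanSpace ℝ (Fin d),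
        Real.sign (∑ i, n i * x i) ≠ Real.sign (∑ i, n i * (x + dlt) i) ∧ s = ‖dlt‖})
    (hdM : ∀ n, dM n = (1 / 2) * sInf {s : ℝ | ∃ x₁ ∈ D, ∃ x₂ ∈ D,
        Real.sign (∑ i, n i * x₁ i) ≠ Real.sign (∑ i, n i * x₂ i) ∧ s = ‖x₁ - x₂‖})
    (n : Fin d → ℝ) :
    de n / dM n ≤ Real.sqrt (∑ j, (∑ i, V i j * n i) ^ 2) / Real.sqrt (∑ i, n i ^ 2) := by
  set q : ℝ := ∑ i, n i ^ 2 with hq_def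
  set num : ℝ := ∑ j, (∑ i, V i j * n i) ^ 2 with hnum_def
  set g : ℝ := Real.sqrt num / Real.sqrt q with hg_def
  have hg0 : 0 ≤ g := by positivity
  set SE : Set ℝ := {s : ℝ | ∃ x ∈ D, ∃ dlt : EuclideanSpace ℝ (Fin d),
      Real.sign (∑ i, n i * x i) ≠ Real.sign (∑ i, n i * (x + dlt) i) ∧ s = ‖dlt‖} with hSE
  set SM : Set ℝ := {s : ℝ | ∃ x₁ ∈ D, ∃ x₂ ∈ D,
      Real.sign (∑ i, n i * x₁ i) ≠ Real.sign (∑ i, n i * x₂ i) ∧ s = ‖x₁ - x₂‖} with hSM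
  have hSE0 : ∀ s ∈ SE, (0:ℝ) ≤ s := by
    rintro s ⟨x, -, dlt, -, rfl⟩; exact norm_nonneg _
  have hSM0 : ∀ s ∈ SM, (0:ℝ) ≤ s := by
    rintro s ⟨x₁, -, x₂, -, -, rfl⟩; exact norm_nonneg _
  have hbddSE : BddBelow SE := ⟨0, fun s hs => hSE0 s hs⟩
  have hde0 : 0 ≤ de n := by rw [hde n]; exact Real.sInf_nonneg hSE0
  by_cases hdm : dM n = 0
  · rw [hdm, div_zero]; positivity
  have hdM0 : 0 ≤ dM n := by
    rw [hdM n]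
    have := Real.sInf_nonneg hSM0
    linarith
  have hdmpos : 0 < dM n := lt_of_le_of_ne hdM0 (Ne.symm hdm)
  rw [div_le_iff₀ hdmpos]
  -- helper: the ε-argument
  have base : ∀ y ∈ D, ∀ z : EuclideanSpace ℝ (Fin d), (∑ i, n i * y i) = 0 →
      (∑ i, n i * z i) ≠ 0 → de n ≤ 0 := by
    intro y hy z hy0 hz0
    by_contra hlt
    push_neg at hlt
    set C : ℝ := ‖(z - y : EuclideanSpace ℝ (Fin d))‖ with hC
    have hC0 : 0 ≤ C := norm_nonneg _
    set ε : ℝ := de n / (2 * (C + 1)) with hε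
    have hεpos : 0 < ε := by positivity
    set dlt : EuclideanSpace ℝ (Fin d) :=
      (WithLp.equiv 2 (Fin d → ℝ)).symm (fun i => ε * (z i - y i)) with hdlt
    have hdlt_apply : ∀ i, dlt i = ε * (z i - y i) := fun i => rfl
    have hsum : (∑ i, n i * (y + dlt) i) = ε * ∑ i, n i * z i := by
      have : ∀ i, n i * (y + dlt) i = n i * y i + ε * (n i * z i) - ε * (n i * y i) := by
        intro i
        have : (y + dlt) i = y i + ε * (z i - y i) := rfl
        rw [this]; ring
      rw [Finset.sum_congr rfl fun i _ => this i]
      rw [Finset.sum_sub_distrib, Finset.sum_add_distrib, ← Finset.mul_sum, ← Finset.mul_sum,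
        hy0]
      ring
    have hmem : ‖dlt‖ ∈ SE := by
      refine ⟨y, hy, dlt, ?_, rfl⟩
      rw [hy0, hsum, Real.sign_zero]
      intro hcon
      exact (mul_ne_zero hεpos.ne' hz0) (Real.sign_eq_zero_iff.mp hcon.symm)
    have hnorm : ‖dlt‖ = ε * C := by
      rw [eunorm, hC, eunorm]
      have : ∀ i, (dlt i) ^ 2 = ε ^ 2 * ((z - y : EuclideanSpace ℝ (Fin d)) i) ^ 2 := by
        intro i
        rw [hdlt_apply i]
        have : (z - y : EuclideanSpace ℝ (Fin d)) i = z i - y i := rfl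
        rw [this]; ring
      rw [Finset.sum_congr rfl fun i _ => this i, ← Finset.mul_sum,
        Real.sqrt_mul (sq_nonneg ε), Real.sqrt_sq hεpos.le]
    have hle : de n ≤ ε * C := by
      rw [← hnorm, hde n]; exact csInf_le hbddSE hmem
    have : ε * C < de n := by
      rw [hε]
      rw [div_mul_eq_mul_div, div_lt_iff₀ (by positivity)]
      nlinarith
    linarith
  -- helper: the distance-to-hyperplane argument
  have main : ∀ y ∈ D, (∑ i, n i * y i) ≠ 0 → q ≠ 0 →
      de n ≤ |∑ i, n i * y i| / Real.sqrt q := by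
    intro y hy hy0 hq
    have hqpos : 0 < q := lt_of_le_of_ne (by positivity) (Ne.symm hq)
    set A : ℝ := ∑ i, n i * y i with hA
    set dlt : EuclideanSpace ℝ (Fin d) :=
      (WithLp.equiv 2 (Fin d → ℝ)).symm (fun i => -(A / q) * n i) with hdlt
    have hsum : (∑ i, n i * (y + dlt) i) = 0 := by
      have : ∀ i, n i * (y + dlt) i = n i * y i + (-(A / q)) * (n i ^ 2) := by
        intro i
        have : (y + dlt) i = y i + -(A / q) * n i := rfl
        rw [this]; ring
      rw [Finset.sum_congr rfl fun i _ => this i, Finset.sum_add_distrib, ← Finset.mul_sum,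
        ← hq_def, ← hA]
      field_simp; ring
    have hmem : ‖dlt‖ ∈ SE := by
      refine ⟨y, hy, dlt, ?_, rfl⟩
      rw [hsum, Real.sign_zero]
      intro hcon
      exact hy0 (Real.sign_eq_zero_iff.mp hcon)
    have hnorm : ‖dlt‖ = |A| / Real.sqrt q := by
      rw [eunorm]
      have : ∀ i, ((dlt : EuclideanSpace ℝ (Fin d)) i) ^ 2 = (A / q) ^ 2 * n i ^ 2 := by
        intro i
        have : (dlt : EuclideanSpace ℝ (Fin d)) i = -(A / q) * n i := rfl
        rw [this]; ring
      rw [Finset.sum_congr rfl fun i _ => this i, ← Finset.mul_sum, ← hq_def,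
        Real.sqrt_mul (sq_nonneg _), Real.sqrt_sq_eq_abs, abs_div, abs_of_pos hqpos]
      rw [div_mul_eq_mul_div, div_eq_div_iff hqpos.ne' (Real.sqrt_pos.mpr hqpos).ne',
        mul_assoc, Real.mul_self_sqrt hqpos.le]
    rw [hde n, ← hnorm]
    exact csInf_le hbddSE hmem
  -- the main claim
  have claim : ∀ s ∈ SM, de n ≤ g / 2 * s := by
    rintro s ⟨x₁, hx₁, x₂, hx₂, hsign, rfl⟩
    have hq : q ≠ 0 := by
      intro h0
      have hni : ∀ i, n i = 0 := by
        intro i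
        have h1 := (Finset.sum_eq_zero_iff_of_nonneg
          (fun i (_ : i ∈ Finset.univ) => sq_nonneg (n i))).mp h0 i (Finset.mem_univ i)
        exact pow_eq_zero_iff two_ne_zero |>.mp h1
      exact hsign (by simp [hni])
    have hqpos : 0 < q := lt_of_le_of_ne (by positivity) (Ne.symm hq)
    have hsqpos : 0 < Real.sqrt q := Real.sqrt_pos.mpr hqpos
    have hnn : 0 ≤ ‖(x₁ - x₂ : EuclideanSpace ℝ (Fin d))‖ := norm_nonneg _
    by_cases ha : (∑ i, n i * x₁ i) = 0
    · have hb : (∑ i, n i * x₂ i) ≠ 0 := by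
        intro hb; exact hsign (by rw [ha, hb])
      have h0 : de n ≤ 0 := base x₁ hx₁ x₂ ha hb
      have : (0:ℝ) ≤ g / 2 * ‖(x₁ - x₂ : EuclideanSpace ℝ (Fin d))‖ := by positivity
      linarith
    by_cases hb : (∑ i, n i * x₂ i) = 0
    · have h0 : de n ≤ 0 := base x₂ hx₂ x₁ hb ha
      have : (0:ℝ) ≤ g / 2 * ‖(x₁ - x₂ : EuclideanSpace ℝ (Fin d))‖ := by positivity
      linarith
    · have h1 : de n ≤ |∑ i, n i * x₁ i| / Real.sqrt q := main x₁ hx₁ ha hq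
      have h2 : de n ≤ |∑ i, n i * x₂ i| / Real.sqrt q := main x₂ hx₂ hb hq
      have hmin : de n ≤ min |∑ i, n i * x₁ i| |∑ i, n i * x₂ i| / Real.sqrt q := by
        rcases le_total |∑ i, n i * x₁ i| |∑ i, n i * x₂ i| with h | h
        · rwa [min_eq_left h]
        · rwa [min_eq_right h]
      have habm : 2 * min |∑ i, n i * x₁ i| |∑ i, n i * x₂ i|
          ≤ |(∑ i, n i * x₁ i) - (∑ i, n i * x₂ i)| := min_abs_le (sign_ne_mul_nonpos hsign)
      obtain ⟨c₁, hc₁⟩ := hrep x₁ hx₁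
      obtain ⟨c₂, hc₂⟩ := hrep x₂ hx₂
      set c : Fin r → ℝ := c₁ - c₂ with hc_def
      have hc : ∀ i, (x₁ - x₂ : EuclideanSpace ℝ (Fin d)) i = ∑ j, V i j * c j := by
        intro i
        have hsub : (x₁ - x₂ : EuclideanSpace ℝ (Fin d)) i = x₁ i - x₂ i := rfl
        rw [hsub, hc₁ i, hc₂ i, ← Finset.sum_sub_distrib]
        refine Finset.sum_congr rfl fun j _ => ?_
        have : c j = c₁ j - c₂ j := rfl
        rw [this]; ring
      have hab2 : (∑ i, n i * x₁ i) - (∑ i, n i * x₂ i)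
          = ∑ j, (∑ i, V i j * n i) * c j := by
        rw [← Finset.sum_sub_distrib]
        have : ∀ i, n i * x₁ i - n i * x₂ i = n i * (x₁ - x₂ : EuclideanSpace ℝ (Fin d)) i := by
          intro i
          have hsub : (x₁ - x₂ : EuclideanSpace ℝ (Fin d)) i = x₁ i - x₂ i := rfl
          rw [hsub]; ring
        rw [Finset.sum_congr rfl fun i _ => this i,
          Finset.sum_congr rfl fun i _ => by rw [hc i]]
        exact sum_n_mul V n c
      have hnormd : ‖(x₁ - x₂ : EuclideanSpace ℝ (Fin d))‖ = Real.sqrt (∑ j, c j ^ 2) := by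
        rw [eunorm]
        congr 1
        rw [Finset.sum_congr rfl fun i _ => by rw [hc i]]
        exact sq_sum_image V hV c
      have hcs : |(∑ i, n i * x₁ i) - (∑ i, n i * x₂ i)|
          ≤ Real.sqrt num * ‖(x₁ - x₂ : EuclideanSpace ℝ (Fin d))‖ := by
        rw [hab2, hnormd, hnum_def]
        exact cs_abs (fun j => ∑ i, V i j * n i) c
      have hfinal : min |∑ i, n i * x₁ i| |∑ i, n i * x₂ i| / Real.sqrt q
          ≤ g / 2 * ‖(x₁ - x₂ : EuclideanSpace ℝ (Fin d))‖ := by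
        rw [hg_def]
        have hnum2 : min |∑ i, n i * x₁ i| |∑ i, n i * x₂ i|
            ≤ Real.sqrt num * ‖(x₁ - x₂ : EuclideanSpace ℝ (Fin d))‖ / 2 := by linarith
        calc min |∑ i, n i * x₁ i| |∑ i, n i * x₂ i| / Real.sqrt q
            ≤ (Real.sqrt num * ‖(x₁ - x₂ : EuclideanSpace ℝ (Fin d))‖ / 2) / Real.sqrt q := by
              gcongr
          _ = Real.sqrt num / Real.sqrt q / 2 * ‖(x₁ - x₂ : EuclideanSpace ℝ (Fin d))‖ := by
              ring
      exact hmin.trans hfinal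
  -- conclude
  have hne : SM.Nonempty := by
    by_contra h
    rw [Set.not_nonempty_iff_eq_empty] at h
    rw [hdM n, ← hSM, h, Real.sInf_empty, mul_zero] at hdm
    exact hdm rfl
  by_cases hgz : g = 0
  · obtain ⟨s, hs⟩ := hne
    have h1 := claim s hs
    rw [hgz] at h1
    have h2 : (0:ℝ) ≤ g * dM n := mul_nonneg hg0 hdM0
    have h3 : (0:ℝ) / 2 * s = 0 := by ring
    rw [h3] at h1
    linarith
  · have hgpos : 0 < g := lt_of_le_of_ne hg0 (Ne.symm hgz)
    have h1 : de n / (g / 2) ≤ sInf SM := by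
      apply le_csInf hne
      intro s hs
      rw [div_le_iff₀ (by positivity)]
      rw [mul_comm]
      exact claim s hs
    have h2 : de n ≤ sInf SM * (g / 2) := (div_le_iff₀ (by positivity)).mp h1
    rw [hdM n, ← hSM]
    have h3 : g * (1 / 2 * sInf SM) = sInf SM * (g / 2) := by ring
    rw [h3]
    exact h2

lemma gauss_mp_unit (v : NNReal) (c : ℝ) (hc : c ^ 2 = 1) :
    MeasurePreserving (fun x : ℝ => c * x) (gaussianReal 0 v) (gaussianReal 0 v) := by
  refine ⟨(measurable_id.const_mul c), ?_⟩
  rw [gaussianReal_map_const_mul c]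
  have h1 : (⟨c ^ 2, sq_nonneg c⟩ : NNReal) = 1 := by ext; simpa using hc
  rw [mul_zero]; congr 1; ext; simp [hc]

section
variable {d : ℕ} (v : NNReal)

noncomputable def hij (i k : Fin d) : (Fin d → ℝ) → ℝ := fun n => n i * n k / ∑ a, n a ^ 2

lemma hij_meas (i k : Fin d) : Measurable (hij i k) := by
  apply Measurable.div
  · exact (measurable_pi_apply i).mul (measurable_pi_apply k)
  · exact Finset.measurable_sum _ fun a _ => (measurable_pi_apply a).pow_const 2

lemma hij_bound (i k : Fin d) (n : Fin d → ℝ) : |hij i k n| ≤ 1 := by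
  unfold hij
  rcases eq_or_ne (∑ a, n a ^ 2) 0 with h | h
  · have hni : n i = 0 := by
      have := (Finset.sum_eq_zero_iff_of_nonneg
        (fun a (_ : a ∈ Finset.univ) => sq_nonneg (n a))).mp h i (Finset.mem_univ i)
      exact pow_eq_zero_iff two_ne_zero |>.mp this
    simp [hni]
  · have hqpos : 0 < ∑ a, n a ^ 2 :=
      lt_of_le_of_ne (by positivity) (Ne.symm h)
    rw [abs_div, abs_of_pos hqpos, div_le_one hqpos]
    have h1 : n i ^ 2 ≤ ∑ a, n a ^ 2 :=
      Finset.single_le_sum (fun a (_ : a ∈ Finset.univ) => sq_nonneg (n a)) (Finset.mem_univ i)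
    have h2 : n k ^ 2 ≤ ∑ a, n a ^ 2 :=
      Finset.single_le_sum (fun a (_ : a ∈ Finset.univ) => sq_nonneg (n a)) (Finset.mem_univ k)
    have : |n i * n k| ≤ (n i ^ 2 + n k ^ 2) / 2 := by
      rw [abs_mul]
      nlinarith [sq_nonneg (|n i| - |n k|), sq_abs (n i), sq_abs (n k), abs_nonneg (n i),
        abs_nonneg (n k)]
    linarith

lemma hij_integrable (i k : Fin d) :
    Integrable (hij i k) (Measure.pi fun _ : Fin d => gaussianReal 0 v) := by
  refine (integrable_const (1:ℝ)).mono' ((hij_meas i k).aestronglyMeasurable) ?_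
  filter_upwards with n
  rw [Real.norm_eq_abs]
  exact hij_bound i k n

lemma hij_zero (hv : v ≠ 0) (i k : Fin d) (hik : i ≠ k) :
    ∫ n, hij i k n ∂(Measure.pi fun _ : Fin d => gaussianReal 0 v) = 0 := by
  classical
  set c : Fin d → ℝ := fun a => if a = i then -1 else 1 with hc
  have hcsq : ∀ a, c a ^ 2 = 1 := by intro a; rw [hc]; by_cases h : a = i <;> simp [h]
  set T : (Fin d → ℝ) → (Fin d → ℝ) := fun n a => c a * n a with hT
  have hinv : Function.Involutive T := by
    intro n; funext a
    have : T (T n) a = c a * (c a * n a) := rfl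
    rw [this, ← mul_assoc, ← sq, hcsq a, one_mul]
  have hmeas : Measurable T :=
    measurable_pi_lambda _ fun a => (show Measurable fun n : Fin d → ℝ => c a * n a by
      fun_prop)
  set E : (Fin d → ℝ) ≃ᵐ (Fin d → ℝ) :=
    { toEquiv := hinv.toPerm T
      measurable_toFun := hmeas
      measurable_invFun := hmeas } with hE
  have hmp : MeasurePreserving (⇑E) (Measure.pi fun _ : Fin d => gaussianReal 0 v)
      (Measure.pi fun _ : Fin d => gaussianReal 0 v) := by
    have := measurePreserving_pi (fun _ : Fin d => gaussianReal 0 v)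
      (fun _ : Fin d => gaussianReal 0 v) (f := fun a x => c a * x)
      (fun a => gauss_mp_unit v (c a) (hcsq a))
    exact this
  have hcomp := hmp.integral_comp' (hij i k)
  have hptw : ∀ n, hij i k (E n) = - hij i k n := by
    intro n
    have hEn : ∀ a, E n a = c a * n a := fun a => rfl
    unfold hij
    have hq : ∑ a, (E n a) ^ 2 = ∑ a, n a ^ 2 := by
      refine Finset.sum_congr rfl fun a _ => ?_
      rw [hEn a, mul_pow, hcsq a, one_mul]
    rw [hq, hEn i, hEn k]
    have hci : c i = -1 := by rw [hc]; simp
    have hck : c k = 1 := by rw [hc]; simp [hik.symm]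
    rw [hci, hck]
    ring_nf
  rw [funext hptw] at hcomp
  rw [integral_neg] at hcomp
  linarith

lemma ae_q_ne_zero (hv : v ≠ 0) (hd : 0 < d) :
    ∀ᵐ n ∂(Measure.pi fun _ : Fin d => gaussianReal 0 v), (∑ a, n a ^ 2) ≠ 0 := by
  classical
  set i₀ : Fin d := ⟨0, hd⟩
  have hsub : {n : Fin d → ℝ | ¬ (∑ a, n a ^ 2) ≠ 0} ⊆ {n : Fin d → ℝ | n i₀ = 0} := by
    intro n hn
    simp only [Set.mem_setOf_eq, not_not] at hn ⊢
    have := (Finset.sum_eq_zero_iff_of_nonneg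
      (fun a (_ : a ∈ Finset.univ) => sq_nonneg (n a))).mp hn i₀ (Finset.mem_univ i₀)
    exact pow_eq_zero_iff two_ne_zero |>.mp this
  have hset : {n : Fin d → ℝ | n i₀ = 0}
      = Set.pi Set.univ (fun a => if a = i₀ then ({0} : Set ℝ) else Set.univ) := by
    ext n
    simp only [Set.mem_setOf_eq, Set.mem_pi, Set.mem_univ, forall_true_left]
    constructor
    · intro h a
      by_cases ha : a = i₀
      · subst ha; simp [h]
      · simp [ha]
    · intro h
      have := h i₀
      simpa using this
  have hz : (Measure.pi fun _ : Fin d => gaussianReal 0 v) {n : Fin d → ℝ | n i₀ = 0} = 0 := by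
    rw [hset, Measure.pi_pi]
    refine Finset.prod_eq_zero (Finset.mem_univ i₀) ?_
    simp only [if_pos rfl]
    exact gaussianReal_absolutelyContinuous 0 hv (by simp)
  rw [Filter.eventually_iff, mem_ae_iff]
  exact measure_mono_null (by intro n hn; exact hsub hn) hz

lemma hij_diag (hv : v ≠ 0) (hd : 0 < d) (i : Fin d) :
    ∫ n, hij i i n ∂(Measure.pi fun _ : Fin d => gaussianReal 0 v) = 1 / d := by
  classical
  set μ := Measure.pi fun _ : Fin d => gaussianReal 0 v with hμ
  -- all diagonal integrals are equal
  have hswap : ∀ k : Fin d, ∫ n, hij k k n ∂μ = ∫ n, hij i i n ∂μ := by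
    intro k
    set e : Fin d ≃ Fin d := Equiv.swap i k with he
    have hmp := measurePreserving_piCongrLeft (fun _ : Fin d => gaussianReal 0 v) e
    have hcomp := hmp.integral_comp' (hij k k)
    have hptw : ∀ x : Fin d → ℝ,
        hij k k ((MeasurableEquiv.piCongrLeft (fun _ : Fin d => ℝ) e) x) = hij i i x := by
      intro x
      have happ : ∀ a, (MeasurableEquiv.piCongrLeft (fun _ : Fin d => ℝ) e) x a
          = x (e.symm a) := by
        intro a
        have h := MeasurableEquiv.piCongrLeft_apply_apply (β := fun _ : Fin d => ℝ) e x (e.symm a)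
        rwa [Equiv.apply_symm_apply] at h
      unfold hij
      have hq : ∑ a, ((MeasurableEquiv.piCongrLeft (fun _ : Fin d => ℝ) e) x a) ^ 2
          = ∑ a, x a ^ 2 := by
        rw [Finset.sum_congr rfl fun a _ => by rw [happ a]]
        exact Equiv.sum_comp e.symm (fun a => x a ^ 2)
      rw [hq, happ k]
      have : e.symm k = i := by rw [he]; simp [Equiv.symm_swap, Equiv.swap_apply_right]
      rw [this]
    rw [funext hptw] at hcomp
    exact hcomp.symm
  -- sum of diagonal integrals is 1
  have hsum : ∑ k : Fin d, ∫ n, hij k k n ∂μ = 1 := by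
    rw [← integral_finset_sum _ (fun k _ => hij_integrable v k k)]
    have hae : (fun n : Fin d → ℝ => ∑ k, hij k k n) =ᵐ[μ] (fun _ => (1:ℝ)) := by
      filter_upwards [ae_q_ne_zero v hv hd] with n hn
      unfold hij
      rw [← Finset.sum_div]
      rw [Finset.sum_congr rfl fun a (_ : a ∈ Finset.univ) => (sq (n a)).symm]
      exact div_self hn
    rw [integral_congr_ae hae]
    simp [hμ]
  rw [Finset.sum_congr rfl fun k _ => hswap k, Finset.sum_const, Finset.card_univ,
    Fintype.card_fin] at hsum
  have hd' : (d:ℝ) ≠ 0 := Nat.cast_ne_zero.mpr hd.ne'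
  field_simp
  rw [mul_comm]
  rw [nsmul_eq_mul] at hsum
  linarith [hsum]
end

lemma VtV_entry {d r : ℕ} (V : Matrix (Fin d) (Fin r) ℝ) (hV : Vᵀ * V = 1) (j j' : Fin r) :
    ∑ i, V i j * V i j' = if j = j' then 1 else 0 := by
  have := congrFun (congrFun hV j) j'
  simpa [Matrix.mul_apply, Matrix.one_apply, Matrix.transpose_apply] using this

lemma G_decomp {d r : ℕ} (V : Matrix (Fin d) (Fin r) ℝ) (n : Fin d → ℝ) :
    (∑ j, (∑ i, V i j * n i) ^ 2) / (∑ a, n a ^ 2)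
      = ∑ i, ∑ k, (∑ j, V i j * V k j) * hij i k n := by
  rcases eq_or_ne (∑ a, n a ^ 2) 0 with h | h
  · simp [hij, h]
  · unfold hij
    have hnum : ∑ j, (∑ i, V i j * n i) ^ 2
        = ∑ i, ∑ k, (∑ j, V i j * V k j) * (n i * n k) := by
      have h1 : ∀ j : Fin r, (∑ i, V i j * n i) ^ 2
          = ∑ i, ∑ k, (V i j * V k j) * (n i * n k) := by
        intro j
        rw [sq, Finset.sum_mul_sum]
        refine Finset.sum_congr rfl fun i _ => Finset.sum_congr rfl fun k _ => by ring
      rw [Finset.sum_congr rfl fun j _ => h1 j, Finset.sum_comm]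
      refine Finset.sum_congr rfl fun i _ => ?_
      rw [Finset.sum_comm]
      refine Finset.sum_congr rfl fun k _ => ?_
      rw [Finset.sum_mul]
    rw [hnum]
    rw [Finset.sum_div]
    refine Finset.sum_congr rfl fun i _ => ?_
    rw [Finset.sum_div]
    refine Finset.sum_congr rfl fun k _ => ?_
    rw [mul_div_assoc]

lemma intG {d r : ℕ} (hd : 0 < d) (V : Matrix (Fin d) (Fin r) ℝ) (hV : Vᵀ * V = 1) :
    ∫ n, (∑ j, (∑ i, V i j * n i) ^ 2) / (∑ a, n a ^ 2)
        ∂(Measure.pi fun _ : Fin d => gaussianReal 0 (d : NNReal)⁻¹)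
      = (r : ℝ) / d := by
  classical
  have hv : ((d : NNReal))⁻¹ ≠ 0 := by
    simp [Nat.cast_ne_zero, hd.ne']
  set v : NNReal := (d : NNReal)⁻¹
  set μ := Measure.pi fun _ : Fin d => gaussianReal 0 v with hμ
  calc ∫ n, (∑ j, (∑ i, V i j * n i) ^ 2) / (∑ a, n a ^ 2) ∂μ
      = ∫ n, ∑ i, ∑ k, (∑ j, V i j * V k j) * hij i k n ∂μ := by
        refine integral_congr_ae (Filter.Eventually.of_forall fun n => ?_)
        exact G_decomp V n
    _ = ∑ i : Fin d, ∑ k : Fin d, (∑ j, V i j * V k j) * ∫ n, hij i k n ∂μ := by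
        rw [integral_finset_sum _ (fun i _ => integrable_finset_sum _
          (fun k _ => (hij_integrable v i k).const_mul _))]
        refine Finset.sum_congr rfl fun i _ => ?_
        rw [integral_finset_sum _ (fun k _ => (hij_integrable v i k).const_mul _)]
        refine Finset.sum_congr rfl fun k _ => ?_
        exact integral_const_mul _ _
    _ = ∑ i : Fin d, (∑ j, V i j * V i j) * (1 / d) := by
        refine Finset.sum_congr rfl fun i _ => ?_
        rw [Finset.sum_eq_single i]
        · rw [hij_diag v hv hd i]
        · intro k _ hk
          rw [hij_zero v hv i k (Ne.symm hk), mul_zero]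
        · intro h; exact absurd (Finset.mem_univ i) h
    _ = (r : ℝ) / d := by
        rw [← Finset.sum_mul]
        have : ∑ i : Fin d, ∑ j, V i j * V i j = (r : ℝ) := by
          rw [Finset.sum_comm]
          rw [Finset.sum_congr rfl fun j _ => VtV_entry V hV j j]
          simp
        rw [this]
        ring

/-- Let `M ⊆ ℝ^d` be the `r`-dimensional subspace spanned by the
orthonormal columns of `V`, `D ⊆ M` a dataset, and for a random normal direction
`n̂ ∼ N(0, (1/d)I)` let `F_n̂(x) = sign(n̂ᵀx)` be the induced linear classifier with
Euclidean margin `d_e(F)` and manifold margin `d_M(F)`.  Then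
`E[d_e(F)/d_M(F)] ≤ √(r/d)`. -/
theorem stmt_13 (d r : ℕ) (hd : 0 < d)
    (V : Matrix (Fin d) (Fin r) ℝ) (hV : Vᵀ * V = 1)
    (M : Submodule ℝ (EuclideanSpace ℝ (Fin d)))
    (hM : M = LinearMap.range (Matrix.toEuclideanLin V))
    (D : Set (EuclideanSpace ℝ (Fin d))) (hD : D ⊆ ↑M)
    (de dM : (Fin d → ℝ) → ℝ)
    (hde : ∀ n, de n = sInf {s : ℝ | ∃ x ∈ D, ∃ dlt : EuclideanSpace ℝ (Fin d),
        Real.sign (∑ i, n i * x i) ≠ Real.sign (∑ i, n i * (x + dlt) i) ∧ s = ‖dlt‖})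
    (hdM : ∀ n, dM n = (1 / 2) * sInf {s : ℝ | ∃ x₁ ∈ D, ∃ x₂ ∈ D,
        Real.sign (∑ i, n i * x₁ i) ≠ Real.sign (∑ i, n i * x₂ i) ∧ s = ‖x₁ - x₂‖}) :
    ∫ n : Fin d → ℝ, de n / dM n
        ∂(Measure.pi fun _ : Fin d => gaussianReal 0 (d : NNReal)⁻¹)
      ≤ Real.sqrt ((r : ℝ) / d) := by
  classical
  set μ := Measure.pi fun _ : Fin d => gaussianReal 0 (d : NNReal)⁻¹ with hμ
  have hprob : IsProbabilityMeasure μ := by rw [hμ]; infer_instance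
  -- representation of points of D
  have hrep : ∀ x ∈ D, ∃ c : Fin r → ℝ, ∀ i, x i = ∑ j, V i j * c j := by
    intro x hx
    have hxM : x ∈ M := hD hx
    rw [hM] at hxM
    obtain ⟨c, hc⟩ := hxM
    refine ⟨fun j => c j, fun i => ?_⟩
    rw [← hc]
    rfl
  set g : (Fin d → ℝ) → ℝ :=
    fun n => Real.sqrt (∑ j, (∑ i, V i j * n i) ^ 2) / Real.sqrt (∑ i, n i ^ 2) with hg
  have hg_nonneg : ∀ n, 0 ≤ g n := fun n => by positivity
  have hg_le_one : ∀ n, g n ≤ 1 := by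
    intro n
    rcases eq_or_ne (Real.sqrt (∑ i, n i ^ 2)) 0 with h | h
    · rw [hg]; simp only; rw [h, div_zero]; norm_num
    · have hpos : 0 < Real.sqrt (∑ i, n i ^ 2) :=
        lt_of_le_of_ne (Real.sqrt_nonneg _) (Ne.symm h)
      rw [hg]; simp only
      rw [div_le_one hpos]
      exact Real.sqrt_le_sqrt (proj_bound V hV n)
  have hg_meas : Measurable g := by
    apply Measurable.div
    · exact (Finset.measurable_sum _ fun j _ =>
        (Finset.measurable_sum _ fun i _ =>
          (measurable_pi_apply i).const_mul _).pow_const 2).sqrt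
    · exact (Finset.measurable_sum _ fun i _ => (measurable_pi_apply i).pow_const 2).sqrt
  have hg_mem2 : MemLp g 2 μ := by
    refine MemLp.of_bound hg_meas.aestronglyMeasurable 1 ?_
    filter_upwards with n
    rw [Real.norm_eq_abs, abs_of_nonneg (hg_nonneg n)]
    exact hg_le_one n
  have hg_int : Integrable g μ := hg_mem2.integrable one_le_two
  -- step 1: monotonicity
  have step1 : ∫ n, de n / dM n ∂μ ≤ ∫ n, g n ∂μ := by
    refine integral_mono_of_nonneg ?_ hg_int ?_
    · filter_upwards with n
      have hde0 : 0 ≤ de n := by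
        rw [hde n]
        refine Real.sInf_nonneg ?_
        rintro s ⟨x, -, dlt, -, rfl⟩; exact norm_nonneg _
      have hdM0 : 0 ≤ dM n := by
        rw [hdM n]
        have : 0 ≤ sInf {s : ℝ | ∃ x₁ ∈ D, ∃ x₂ ∈ D,
            Real.sign (∑ i, n i * x₁ i) ≠ Real.sign (∑ i, n i * x₂ i) ∧ s = ‖x₁ - x₂‖} := by
          refine Real.sInf_nonneg ?_
          rintro s ⟨x₁, -, x₂, -, -, rfl⟩; exact norm_nonneg _
        linarith
      exact div_nonneg hde0 hdM0
    · filter_upwards with n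
      exact pointwise_bound V hV D hrep de dM hde hdM n
  -- step 2: second moment of g
  have hgsq : ∫ n, (g ^ 2) n ∂μ = (r : ℝ) / d := by
    have hfun : (g ^ 2) = fun n =>
        (∑ j, (∑ i, V i j * n i) ^ 2) / (∑ a, n a ^ 2) := by
      funext n
      have happ : (g ^ 2) n = g n ^ 2 := rfl
      rw [happ, hg]
      simp only
      rcases eq_or_ne (∑ a, n a ^ 2) 0 with h | h
      · have hni : ∀ i, n i = 0 := by
          intro i
          have := (Finset.sum_eq_zero_iff_of_nonneg
            (fun a (_ : a ∈ Finset.univ) => sq_nonneg (n a))).mp h i (Finset.mem_univ i)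
          exact pow_eq_zero_iff two_ne_zero |>.mp this
        simp [hni]
      · rw [div_pow, Real.sq_sqrt (by positivity), Real.sq_sqrt (by positivity)]
    rw [hfun, hμ]
    exact intG hd V hV
  -- step 3: Cauchy–Schwarz / variance
  have hvar := variance_nonneg g μ
  rw [variance_eq_sub hg_mem2] at hvar
  rw [hgsq] at hvar
  have hint_nonneg : 0 ≤ ∫ n, g n ∂μ := integral_nonneg hg_nonneg
  have hfinal : ∫ n, g n ∂μ ≤ Real.sqrt ((r : ℝ) / d) := by
    rw [Real.le_sqrt hint_nonneg (by positivity)]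
    linarith
  exact step1.trans hfinal
end
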